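/- arXiv:0811.3475 — 4 statements merged into one kernel-verified Lean document; each statement's English description precedes it below -/
import Mathlib

section
/- In a directed multigraph with distinct nonadjacent vertices s and t, if [S, S̄] is an s,t-edge cut (i.e., S contains s but not t and [S,S̄] is the set of edges from S to its complement S̄) such that s is not the tail of any edge in [S,S̄], then the set of tails of edges in [S,S̄] is an s,t-vertex cut (i.e., deleting these vertices destroys all paths from s to t). -/
/-- A directed multigraph on vertex type `V` with edge type `E`. -/
structure Multigraph (V E : Type) where
  tail : E → V
  head : E → V

namespace Multigraph

variable {V E : Type}

/-- A (directed) walk from `s` to `t`: a nonempty list of edges, consecutive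
edges compatible, starting at `s` and ending at `t`. -/
structure Walk (G : Multigraph V E) (s t : V) where
  edges : List E
  ne : edges ≠ []
  first : G.tail (edges.head ne) = s
  last : G.head (edges.getLast ne) = t
  chain : edges.Chain' fun e f => G.head e = G.tail f

namespace Walk

variable {G : Multigraph V E} {s t : V}

/-- The internal vertices of a walk: heads of all edges except the last. -/
def internals (w : G.Walk s t) : Set V :=
  {v | ∃ e ∈ w.edges.dropLast, G.head e = v}

/-- All vertices visited by a walk. -/
def vertexSet (w : G.Walk s t) : Set V :=
  {v | v = s ∨ ∃ e ∈ w.edges, G.head e = v}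

/-- The set of edges used by a walk. -/
def edgeSet (w : G.Walk s t) : Set E := {e | e ∈ w.edges}

/-- A walk is simple (a path) if it visits no vertex twice. -/
def IsSimple (w : G.Walk s t) : Prop := (s :: w.edges.map G.head).Nodup

end Walk

/-- There exist `n` pairwise internally-disjoint paths from `s` to `t`
(in a multigraph, parallel direct edges count as distinct internally-disjoint
paths, so pairwise edge-disjointness is also required). -/
def HasIntDisjoint (G : Multigraph V E) (s t : V) (n : ℕ) : Prop :=
  ∃ P : Fin n → G.Walk s t, ∀ i j, i ≠ j →
    (P i).internals ∩ (P j).internals = ∅ ∧ (P i).edgeSet ∩ (P j).edgeSet = ∅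

/-- There exist `n` pairwise edge-disjoint walks from `s` to `t`. -/
def HasEdgeDisjoint (G : Multigraph V E) (s t : V) (n : ℕ) : Prop :=
  ∃ P : Fin n → G.Walk s t, ∀ i j, i ≠ j →
    (P i).edgeSet ∩ (P j).edgeSet = ∅

/-- `A ⊆ V \ {s,t}` is an `s,t`-vertex cut: removing `A` destroys all
walks from `s` to `t`, i.e. every walk from `s` to `t` meets `A`. -/
def IsVertexCut (G : Multigraph V E) (s t : V) (A : Set V) : Prop :=
  s ∉ A ∧ t ∉ A ∧ ∀ w : G.Walk s t, ∃ v ∈ w.vertexSet, v ∈ A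

/-- There is no edge from `s` to `t`. -/
def Nonadjacent (G : Multigraph V E) (s t : V) : Prop :=
  ∀ e : E, ¬(G.tail e = s ∧ G.head e = t)

/-- The edge cut `[S, S̄]`: all edges with tail in `S` and head outside `S`. -/
def cutE (G : Multigraph V E) [Fintype E] [DecidableEq V] (S : Finset V) : Finset E :=
  Finset.univ.filter fun e => G.tail e ∈ S ∧ G.head e ∉ S

/-- `tail([S, S̄])`: the set of tails of the edges in the cut `[S, S̄]`. -/
def tailSet (G : Multigraph V E) [Fintype E] [DecidableEq V] (S : Finset V) : Finset V :=
  (G.cutE S).image G.tail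

/-- The parents of a vertex `v`. -/
def parents (G : Multigraph V E) (v : V) : Set V :=
  {u | ∃ e : E, G.tail e = u ∧ G.head e = v}

/-- The in-degree of a vertex: number of edges entering it. -/
def indeg (G : Multigraph V E) [Fintype E] [DecidableEq V] (t : V) : ℕ :=
  (Finset.univ.filter fun e => G.head e = t).card

/-- The diversity `d(v) = |Γ⁻(v) \ {s}| + |[s,v]|` of a vertex `v`
with respect to the source `s`. -/
def diversity (G : Multigraph V E) [Fintype V] [Fintype E] [DecidableEq V]
    (s v : V) : ℕ :=
  (Finset.univ.filter fun u => u ≠ s ∧ ∃ e : E, G.tail e = u ∧ G.head e = v).card +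
  (Finset.univ.filter fun e : E => G.tail e = s ∧ G.head e = v).card

/-- A multigraph is acyclic if it has no closed walk. -/
def Acyclic (G : Multigraph V E) : Prop := ∀ v : V, IsEmpty (G.Walk v v)

/-- The broadcast transformation with source `s`: every vertex `u ≠ s` is
split into `u → u⁺`, all edges into `u` are kept, and every edge out of
`u` is redirected to originate from `u⁺` (edges out of `s` are unchanged). -/
def broadcast (G : Multigraph V E) (s : V) [DecidableEq V] :
    Multigraph (V ⊕ {u : V // u ≠ s}) (E ⊕ {u : V // u ≠ s}) where
  tail := fun x => match x with
    | Sum.inl e => if h : G.tail e = s then Sum.inl s else Sum.inr ⟨G.tail e, h⟩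
    | Sum.inr u => Sum.inl u.1
  head := fun x => match x with
    | Sum.inl e => Sum.inl (G.head e)
    | Sum.inr u => Sum.inr u

/-- `hw` is the walk in the broadcast transformation corresponding to `w`:
the original edges appearing along `hw`, in order, are exactly those of `w`. -/
def Corresponds [DecidableEq V] {G : Multigraph V E} {s t : V} (w : G.Walk s t)
    (hw : (G.broadcast s).Walk (Sum.inl s) (Sum.inl t)) : Prop :=
  hw.edges.filterMap (Sum.elim some (fun _ => none)) = w.edges

/-- `v` is reachable from `s` by a walk avoiding the vertex set `A`
(in the graph `G − A`). -/
def ReachAvoid (G : Multigraph V E) (A : Set V) (s v : V) : Prop :=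
  v = s ∨ ∃ w : G.Walk s v, ∀ x ∈ w.vertexSet, x ∉ A

end Multigraph

lemma cross_aux {V E : Type} [DecidableEq V] (G : Multigraph V E) (S : Finset V) :
    ∀ (l : List E) (h : l ≠ []),
      l.Chain' (fun e f => G.head e = G.tail f) →
      G.tail (l.head h) ∈ S → G.head (l.getLast h) ∉ S →
      ∃ e ∈ l, G.tail e ∈ S ∧ G.head e ∉ S := by
  intro l
  induction l with
  | nil => intro h; exact absurd rfl h
  | cons a rest ih =>
    intro _ hch hhead hlast
    by_cases hA : G.head a ∈ S
    · match rest, hch with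
      | [], _ => exact absurd hA hlast
      | b :: r, hch =>
        have hch' : (b :: r).Chain' (fun e f => G.head e = G.tail f) := hch.tail
        have htb : G.head a = G.tail b := List.isChain_cons_cons.mp hch |>.1
        have hlast' : G.head ((b :: r).getLast (by simp)) ∉ S := by
          simpa [List.getLast_cons] using hlast
        obtain ⟨e, he, h1, h2⟩ := ih (by simp) hch' (by simpa [← htb] using hA) hlast'
        exact ⟨e, List.mem_cons_of_mem _ he, h1, h2⟩
    · exact ⟨a, List.mem_cons_self, hhead, hA⟩

lemma tail_aux {V E : Type} (G : Multigraph V E) :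
    ∀ (l : List E) (h : l ≠ []),
      l.Chain' (fun e f => G.head e = G.tail f) →
      ∀ e ∈ l, G.tail e = G.tail (l.head h) ∨ ∃ f ∈ l, G.head f = G.tail e := by
  intro l
  induction l with
  | nil => intro h; exact absurd rfl h
  | cons a rest ih =>
    intro _ hch e he
    rcases List.mem_cons.mp he with rfl | he'
    · exact Or.inl rfl
    · have hne : rest ≠ [] := List.ne_nil_of_mem he'
      rcases ih hne hch.tail e he' with h1 | ⟨f, hf, hf2⟩
      · right
        refine ⟨a, List.mem_cons_self, ?_⟩
        have := List.isChain_cons.mp hch |>.1 (rest.head hne)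
          (by rw [List.head?_eq_head hne]; rfl)
        rw [h1]; exact this
      · exact Or.inr ⟨f, List.mem_cons_of_mem _ hf, hf2⟩

/-- If `[S,S̄]` is an `s,t`-edge cut with `s` not the tail of any
cut edge, then `tail([S,S̄])` is an `s,t`-vertex cut. -/
theorem stmt0 {V E : Type} [Fintype E] [DecidableEq V]
    (G : Multigraph V E) (s t : V) (hst : s ≠ t) (hna : G.Nonadjacent s t)
    (S : Finset V) (hsS : s ∈ S) (htS : t ∉ S)
    (hs : s ∉ G.tailSet S) :
    G.IsVertexCut s t ↑(G.tailSet S) := by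
  refine ⟨by simpa using hs, ?_, ?_⟩
  · -- t ∉ tailSet
    intro ht
    simp only [Finset.coe_mem, Multigraph.tailSet, Finset.coe_image, Set.mem_image,
      Finset.mem_coe, Multigraph.cutE, Finset.mem_image, Finset.mem_filter] at ht
    obtain ⟨e, he, rfl⟩ := ht
    exact htS he.2.1
  · intro w
    obtain ⟨e, he, h1, h2⟩ := cross_aux G S w.edges w.ne w.chain
      (by rw [w.first]; exact hsS) (by rw [w.last]; exact htS)
    have hecut : e ∈ G.cutE S := by
      simp [Multigraph.cutE, h1, h2]
    have hts : G.tail e ∈ G.tailSet S := Finset.mem_image_of_mem _ hecut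
    refine ⟨G.tail e, ?_, by simpa using hts⟩
    rcases tail_aux G w.edges w.ne w.chain e he with h3 | ⟨f, hf, hf2⟩
    · rw [w.first] at h3
      exact absurd (h3 ▸ hts) hs
    · exact Or.inr ⟨f, hf, hf2⟩
end

section
/- In a directed multigraph with distinct nonadjacent vertices s and t, every minimal s,t-vertex cut A equals tail([S, S̄]) for some s,t-edge cut [S, S̄] with s ∉ tail([S, S̄]). -/
section Aux

variable {V E : Type}

/-- Reachability from `s` avoiding vertex set `A` (inductive version). -/
inductive MyReach (G : Multigraph V E) (A : Set V) (s : V) : V → Prop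
  | base : MyReach G A s s
  | step {u : V} {e : E} : MyReach G A s u → G.tail e = u → G.head e ∉ A →
      MyReach G A s (G.head e)

/-- Append an edge to a walk. -/
def Multigraph.Walk.snoc {G : Multigraph V E} {s u : V} (w : G.Walk s u) (e : E)
    (h : G.tail e = u) : G.Walk s (G.head e) where
  edges := w.edges ++ [e]
  ne := by simp
  first := by
    rw [List.head_append_of_ne_nil w.ne]
    exact w.first
  last := by simp
  chain := by
    rw [List.Chain', List.isChain_append]
    refine ⟨w.chain, List.isChain_singleton e, ?_⟩
    intro x hx y hy
    simp only [List.head?_cons, Option.mem_def, Option.some.injEq] at hy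
    subst hy
    rw [List.getLast?_eq_getLast w.ne, Option.mem_def, Option.some.injEq] at hx
    subst hx
    rw [w.last, h]

lemma myReach_walk {G : Multigraph V E} {A : Set V} {s v : V}
    (h : MyReach G A s v) :
    v = s ∨ ∃ w : G.Walk s v, ∀ e ∈ w.edges, G.head e ∉ A := by
  induction h with
  | base => exact Or.inl rfl
  | @step u e hr hte hhe ih =>
    right
    rcases ih with rfl | ⟨w, hw⟩
    · refine ⟨⟨[e], by simp, by simpa using hte, by simp, List.isChain_singleton e⟩, ?_⟩
      intro f hf
      simp only [List.mem_singleton] at hf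
      subst hf; exact hhe
    · refine ⟨w.snoc e hte, ?_⟩
      intro f hf
      simp only [Multigraph.Walk.snoc, List.mem_append, List.mem_singleton] at hf
      rcases hf with hf | rfl
      · exact hw f hf
      · exact hhe

lemma myReach_steps {G : Multigraph V E} (A : Set V) (s a : V)
    (hstep : ∀ e : E, G.tail e = a → G.head e ∉ A → MyReach G A s (G.head e)) :
    ∀ (l : List E), l.Chain' (fun e f => G.head e = G.tail f) →
      (∀ e ∈ l, G.head e ∉ A ∨ G.head e = a) →
      ∀ (u : V), (MyReach G A s u ∨ u = a) →
      (∀ h : l ≠ [], G.tail (l.head h) = u) →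
      ∀ h : l ≠ [], (MyReach G A s (G.head (l.getLast h)) ∨ G.head (l.getLast h) = a) := by
  intro l
  induction l with
  | nil => intro _ _ _ _ _ h; exact absurd rfl h
  | cons e l ih =>
    intro hch hheads u hu hfirst _
    have hte : G.tail e = u := hfirst (by simp)
    have hnext : MyReach G A s (G.head e) ∨ G.head e = a := by
      rcases hheads e (by simp) with h1 | h1
      · left
        rcases hu with h2 | h2
        · exact MyReach.step h2 hte h1
        · exact hstep e (by rw [hte, h2]) h1
      · exact Or.inr h1
    cases l with
    | nil => simpa using hnext
    | cons f l' =>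
      rw [List.Chain', List.isChain_cons_cons] at hch
      have := ih hch.2 (fun e' he' => hheads e' (List.mem_cons_of_mem _ he'))
        (G.head e) hnext (fun _ => hch.1.symm) (by simp)
      simpa [List.getLast] using this

end Aux

/-- Every minimal `s,t`-vertex cut `A` equals `tail([S,S̄])` for
some `s,t`-edge cut `[S,S̄]` with `s ∉ tail([S,S̄])`. -/
theorem stmt1 {V E : Type} [Fintype V] [Fintype E] [DecidableEq V]
    (G : Multigraph V E) (s t : V) (hst : s ≠ t) (hna : G.Nonadjacent s t)
    (A : Finset V) (hcut : G.IsVertexCut s t ↑A)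
    (hmin : ∀ B : Finset V, B ⊆ A → G.IsVertexCut s t ↑B → B = A) :
    ∃ S : Finset V, s ∈ S ∧ t ∉ S ∧ s ∉ G.tailSet S ∧ A = G.tailSet S := by
  classical
  obtain ⟨hsA, htA, hwalks⟩ := hcut
  set S : Finset V := Finset.univ.filter (fun v => v ∈ A ∨ MyReach G ↑A s v) with hS
  have hmemS : ∀ v : V, v ∈ S ↔ (v ∈ A ∨ MyReach G ↑A s v) := by
    intro v; simp [hS]
  -- no reach to t
  have hreach_t : ¬ MyReach G ↑A s t := by
    intro h
    rcases myReach_walk h with rfl | ⟨w, hw⟩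
    · exact hst rfl
    · obtain ⟨v, hv, hvA⟩ := hwalks w
      rcases hv with rfl | ⟨e, he, rfl⟩
      · exact hsA hvA
      · exact hw e he hvA
  have hsS : s ∈ S := (hmemS s).2 (Or.inr MyReach.base)
  have htS : t ∉ S := by
    rw [hmemS]
    rintro (h | h)
    · exact htA h
    · exact hreach_t h
  -- tails of the cut edges are in A
  have htail_sub : ∀ v ∈ G.tailSet S, v ∈ A := by
    intro v hv
    simp only [Multigraph.tailSet, Finset.mem_image, Multigraph.cutE,
      Finset.mem_filter, Finset.mem_univ, true_and] at hv
    obtain ⟨e, ⟨hte, hhe⟩, rfl⟩ := hv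
    by_contra hvA
    rcases (hmemS _).1 hte with h | h
    · exact hvA h
    · by_cases hheA : G.head e ∈ A
      · exact hhe ((hmemS _).2 (Or.inl hheA))
      · exact hhe ((hmemS _).2 (Or.inr (MyReach.step h rfl hheA)))
  have hsT : s ∉ G.tailSet S := fun h => hsA (htail_sub s h)
  refine ⟨S, hsS, htS, hsT, ?_⟩
  apply Finset.Subset.antisymm _ (fun v hv => htail_sub v hv)
  -- A ⊆ tailSet S, using minimality
  intro a haA
  by_contra hat
  -- a can step only inside S
  have hstep : ∀ e : E, G.tail e = a → G.head e ∉ (↑A : Set V) →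
      MyReach G ↑A s (G.head e) := by
    intro e hte hhe
    have heS : G.head e ∈ S := by
      by_contra hheS
      exact hat (Finset.mem_image.2 ⟨e, by
        simp only [Multigraph.cutE, Finset.mem_filter, Finset.mem_univ, true_and]
        exact ⟨hte ▸ (hmemS a).2 (Or.inl haA), hheS⟩, hte⟩)
    rcases (hmemS _).1 heS with h | h
    · exact absurd h hhe
    · exact h
  -- A.erase a is still a cut
  have hBcut : G.IsVertexCut s t ↑(A.erase a) := by
    refine ⟨by simp [hsA], by simp [htA], ?_⟩
    intro w
    by_contra hB
    push_neg at hB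
    have hAa : ∀ v ∈ w.vertexSet, v ∈ A → v = a := by
      intro v hv hvA
      have := hB v hv
      simp only [Finset.coe_erase, Set.mem_diff, Set.mem_singleton_iff, not_and,
        not_not] at this
      exact this hvA
    have hheads : ∀ e ∈ w.edges, G.head e ∉ (↑A : Set V) ∨ G.head e = a := by
      intro e he
      by_cases h : G.head e ∈ A
      · exact Or.inr (hAa _ (Or.inr ⟨e, he, rfl⟩) h)
      · exact Or.inl (by simpa using h)
    have := myReach_steps (↑A) s a hstep w.edges w.chain hheads s
      (Or.inl MyReach.base) (fun _ => w.first) w.ne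
    rw [w.last] at this
    rcases this with h | rfl
    · exact hreach_t h
    · exact htA haA
  have := hmin (A.erase a) (Finset.erase_subset a A) hBcut
  exact absurd (this ▸ Finset.notMem_erase a A) (by simp [haA])
end

section
/- In a directed multigraph with distinct nonadjacent vertices s and t, the maximum number of pairwise internally-disjoint directed paths from s to t equals the minimum of |tail([S, S̄])| over all s,t-edge cuts [S, S̄] such that s ∉ tail([S, S̄]). -/
-- ===AUX START===
namespace Multigraph
variable {V E : Type}

section Lists
variable (G : Multigraph V E)

/-- crossing lemma -/
lemma exists_crossing (S : Set V) :
    ∀ (L : List E) (hne : L ≠ []), (L.Chain' fun e f => G.head e = G.tail f) →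
    G.tail (L.head hne) ∈ S → G.head (L.getLast hne) ∉ S →
    ∃ e ∈ L, G.tail e ∈ S ∧ G.head e ∉ S := by
  intro L
  induction L with
  | nil => simp
  | cons x L ih =>
    intro hne hch hx hl
    rcases eq_or_ne L [] with rfl | hL
    · exact ⟨x, by simp, by simpa using hx, by simpa using hl⟩
    · by_cases hhx : G.head x ∈ S
      · have hch' : L.Chain' fun e f => G.head e = G.tail f := hch.tail
        have hrel : G.head x = G.tail (L.head hL) := by
          have := List.isChain_cons.1 hch |>.1
          exact this _ (by rw [List.head?_eq_head hL]; rfl)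
        have hl' : G.head (L.getLast hL) ∉ S := by
          rwa [List.getLast_cons hL] at hl
        obtain ⟨e, he, h1, h2⟩ := ih hL hch' (hrel ▸ hhx) hl'
        exact ⟨e, List.mem_cons_of_mem _ he, h1, h2⟩
      · exact ⟨x, by simp, by simpa using hx, hhx⟩

/-- every edge's tail is the start or an internal head -/
lemma tail_mem_internal :
    ∀ (L : List E) (hne : L ≠ []), (L.Chain' fun e f => G.head e = G.tail f) →
    ∀ e ∈ L, G.tail e = G.tail (L.head hne) ∨ ∃ f ∈ L.dropLast, G.head f = G.tail e := by
  intro L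
  induction L with
  | nil => simp
  | cons x L ih =>
    intro hne hch e he
    rcases List.mem_cons.1 he with rfl | he'
    · left; simp
    · have hL : L ≠ [] := List.ne_nil_of_mem he'
      have hch' : L.Chain' fun e f => G.head e = G.tail f := hch.tail
      have hrel : G.head x = G.tail (L.head hL) := by
        have := List.isChain_cons.1 hch |>.1
        exact this _ (by rw [List.head?_eq_head hL]; rfl)
      have hdl : (x :: L).dropLast = x :: L.dropLast := by
        rcases L with _ | ⟨y, L⟩
        · exact absurd rfl hL
        · rfl
      rcases ih hL hch' e he' with h | ⟨f, hf, hf2⟩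
      · right; exact ⟨x, by rw [hdl]; simp, hrel.trans h.symm⟩
      · right; exact ⟨f, by rw [hdl]; exact List.mem_cons_of_mem _ hf, hf2⟩

end Lists

section Lists2
variable (G : Multigraph V E) [DecidableEq V]

/-- counting identity along a chain -/
lemma count_identity :
    ∀ (L : List E) (hne : L ≠ []), (L.Chain' fun e f => G.head e = G.tail f) →
    ∀ v : V, (L.countP fun e => G.head e = v) + (if G.tail (L.head hne) = v then 1 else 0)
      = (L.countP fun e => G.tail e = v) + (if G.head (L.getLast hne) = v then 1 else 0) := by
  intro L
  induction L with
  | nil => simp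
  | cons x L ih =>
    intro hne hch v
    rcases eq_or_ne L [] with rfl | hL
    · simp only [List.countP_cons, List.countP_nil, List.head_cons, List.getLast_singleton]
      by_cases h1 : G.head x = v <;> by_cases h2 : G.tail x = v <;>
        simp [h1, h2]
    · have hch' : L.Chain' fun e f => G.head e = G.tail f := hch.tail
      have hrel : G.head x = G.tail (L.head hL) := by
        have := List.isChain_cons.1 hch |>.1
        exact this _ (by rw [List.head?_eq_head hL]; rfl)
      have key := ih hL hch' v
      rw [List.getLast_cons hL]
      simp only [List.countP_cons, List.head_cons]
      rw [← hrel] at key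
      by_cases h1 : G.head x = v <;> by_cases h2 : G.tail x = v <;>
        simp [h1, h2] at key ⊢ <;> omega

omit [DecidableEq V] in
/-- successor edge in a chain -/
lemma exists_next :
    ∀ (L : List E) (hne : L ≠ []), (L.Chain' fun e f => G.head e = G.tail f) →
    ∀ e ∈ L, e ≠ L.getLast hne → ∃ f ∈ L, G.head e = G.tail f := by
  intro L
  induction L with
  | nil => simp
  | cons x L ih =>
    intro hne hch e he hlast
    rcases eq_or_ne L [] with rfl | hL
    · simp at he; subst he; simp at hlast
    · have hch' : L.Chain' fun e f => G.head e = G.tail f := hch.tail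
      have hrel : G.head x = G.tail (L.head hL) := by
        have := List.isChain_cons.1 hch |>.1
        exact this _ (by rw [List.head?_eq_head hL]; rfl)
      rcases List.mem_cons.1 he with rfl | he'
      · exact ⟨L.head hL, List.mem_cons_of_mem _ (List.head_mem hL), hrel⟩
      · have : e ≠ L.getLast hL := by rwa [List.getLast_cons hL] at hlast
        obtain ⟨f, hf, hf2⟩ := ih hL hch' e he' this
        exact ⟨f, List.mem_cons_of_mem _ hf, hf2⟩

end Lists2

section WalkCons
variable {G : Multigraph V E}

/-- single-edge walk -/
def Walk.single (e : E) : G.Walk (G.tail e) (G.head e) :=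
  ⟨[e], by simp, rfl, rfl, List.isChain_singleton _⟩

@[simp] lemma Walk.single_edges (e : E) : (Walk.single (G := G) e).edges = [e] := rfl

/-- append an edge to a walk -/
def Walk.snoc_s2 {a b : V} (w : G.Walk a b) (e : E) (he : G.tail e = b) :
    G.Walk a (G.head e) where
  edges := w.edges ++ [e]
  ne := by simp
  first := by
    rw [List.head_append]
    simp [List.isEmpty_iff, w.ne, w.first]
  last := by
    rw [List.getLast_append]
    simp
  chain := by
    rw [List.Chain', List.isChain_append]
    refine ⟨w.chain, by simp, ?_⟩
    intro x hx y hy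
    simp only [List.head?_cons, Option.mem_some_iff] at hy
    rw [List.getLast?_eq_getLast w.ne, Option.mem_some_iff] at hx
    subst hx; subst hy
    rw [w.last, he]

@[simp] lemma Walk.snoc_edges {a b : V} (w : G.Walk a b) (e : E) (he : G.tail e = b) :
    (w.snoc_s2 e he).edges = w.edges ++ [e] := rfl

lemma Walk.vertexSet_single (e : E) :
    (Walk.single (G := G) e).vertexSet ⊆ {G.tail e, G.head e} := by
  intro v hv
  rcases hv with rfl | ⟨f, hf, rfl⟩
  · exact Or.inl rfl
  · simp only [single_edges, List.mem_singleton] at hf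
    subst hf; exact Or.inr rfl

lemma Walk.vertexSet_snoc {a b : V} (w : G.Walk a b) (e : E) (he : G.tail e = b) :
    (w.snoc_s2 e he).vertexSet ⊆ w.vertexSet ∪ {G.head e} := by
  intro v hv
  rcases hv with rfl | ⟨f, hf, rfl⟩
  · exact Or.inl (Or.inl rfl)
  · simp only [snoc_edges, List.mem_append, List.mem_singleton] at hf
    rcases hf with hf | rfl
    · exact Or.inl (Or.inr ⟨f, hf, rfl⟩)
    · exact Or.inr rfl

end WalkCons

section Short
variable {G : Multigraph V E} {s t : V}

lemma getLast_concat' {α : Type*} (l : List α) (x : α) (h : (l ++ [x]) ≠ []) :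
    (l ++ [x]).getLast h = x := by
  rw [List.getLast_append]; simp

lemma head_append' {α : Type*} (l l' : List α) (h : l ≠ []) (h2 : (l ++ l') ≠ []) :
    (l ++ l').head h2 = l.head h := by
  rw [List.head_append]; simp [List.isEmpty_iff, h]

lemma head_congr {α : Type*} {l m : List α} (h : l = m) (hl : l ≠ []) :
    l.head hl = m.head (h ▸ hl) := by subst h; rfl

lemma getLast_congr {α : Type*} {l m : List α} (h : l = m) (hl : l ≠ []) :
    l.getLast hl = m.getLast (h ▸ hl) := by subst h; rfl

/-- shortening: a walk can be pruned so that s,t are not internal -/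
lemma exists_short : ∀ (n : ℕ) (w : G.Walk s t), w.edges.length ≤ n →
    ∃ w' : G.Walk s t, (∀ e ∈ w'.edges, e ∈ w.edges) ∧
      s ∉ w'.internals ∧ t ∉ w'.internals := by
  intro n
  induction n with
  | zero => intro w hw; exact absurd (List.length_eq_zero_iff.1 (Nat.le_zero.1 hw)) w.ne
  | succ n ih =>
    intro w hw
    have hsplit : w.edges.dropLast ++ [w.edges.getLast w.ne] = w.edges :=
      List.dropLast_append_getLast w.ne
    by_cases hT : ∃ e ∈ w.edges.dropLast, G.head e = t
    · obtain ⟨e, he, hhe⟩ := hT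
      obtain ⟨l₁, l₂, hdec⟩ := List.append_of_mem he
      have hedges : w.edges = (l₁ ++ [e]) ++ (l₂ ++ [w.edges.getLast w.ne]) := by
        rw [show l₁ ++ [e] ++ (l₂ ++ [w.edges.getLast w.ne])
            = (l₁ ++ e :: l₂) ++ [w.edges.getLast w.ne] by simp, ← hdec]
        exact hsplit.symm
      have hne1 : l₁ ++ [e] ≠ [] := by simp
      have hch := w.chain
      rw [hedges, List.Chain', List.isChain_append] at hch
      have hf1 : G.tail ((l₁ ++ [e]).head hne1) = s := by
        rw [← w.first, head_congr hedges w.ne, head_append' _ _ hne1]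
      have hl1 : G.head ((l₁ ++ [e]).getLast hne1) = t := by
        rw [getLast_concat' _ _ hne1, hhe]
      have hlenw : w.edges.length = l₁.length + 1 + (l₂.length + 1) := by
        rw [hedges]; simp; omega
      obtain ⟨w', h1, h2, h3⟩ := ih ⟨l₁ ++ [e], hne1, hf1, hl1, hch.1⟩
        (show (l₁ ++ [e]).length ≤ n by simp; omega)
      refine ⟨w', fun f hf => ?_, h2, h3⟩
      have hmem : f ∈ l₁ ++ [e] := h1 f hf
      rw [hedges]
      exact List.mem_append_left _ hmem
    · by_cases hS : ∃ e ∈ w.edges.dropLast, G.head e = s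
      · obtain ⟨e, he, hhe⟩ := hS
        obtain ⟨l₁, l₂, hdec⟩ := List.append_of_mem he
        have hedges : w.edges = (l₁ ++ [e]) ++ (l₂ ++ [w.edges.getLast w.ne]) := by
          rw [show l₁ ++ [e] ++ (l₂ ++ [w.edges.getLast w.ne])
            = (l₁ ++ e :: l₂) ++ [w.edges.getLast w.ne] by simp, ← hdec]
          exact hsplit.symm
        have hne1 : l₁ ++ [e] ≠ [] := by simp
        have hne2 : l₂ ++ [w.edges.getLast w.ne] ≠ [] := by simp
        have hch := w.chain
        rw [hedges, List.Chain', List.isChain_append] at hch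
        have hjunction : G.head e = G.tail ((l₂ ++ [w.edges.getLast w.ne]).head hne2) := by
          refine hch.2.2 e ?_ _ ?_
          · rw [List.getLast?_eq_getLast hne1, getLast_concat' _ _ hne1]; rfl
          · rw [List.head?_eq_head hne2]; rfl
        have hf2 : G.tail ((l₂ ++ [w.edges.getLast w.ne]).head hne2) = s := by
          rw [← hjunction, hhe]
        have hl2 : G.head ((l₂ ++ [w.edges.getLast w.ne]).getLast hne2) = t := by
          rw [getLast_concat' _ _ hne2]; exact w.last
        have hlenw : w.edges.length = l₁.length + 1 + (l₂.length + 1) := by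
          rw [hedges]; simp; omega
        obtain ⟨w', h1, h2, h3⟩ := ih ⟨l₂ ++ [w.edges.getLast w.ne], hne2, hf2, hl2, hch.2.1⟩
          (show (l₂ ++ [w.edges.getLast w.ne]).length ≤ n by simp; omega)
        refine ⟨w', fun f hf => ?_, h2, h3⟩
        have hmem : f ∈ l₂ ++ [w.edges.getLast w.ne] := h1 f hf
        rw [hedges]
        exact List.mem_append_right _ hmem
      · refine ⟨w, fun f hf => hf, ?_, ?_⟩
        · intro ⟨e, he, hhe⟩; exact hS ⟨e, he, hhe⟩
        · intro ⟨e, he, hhe⟩; exact hT ⟨e, he, hhe⟩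

end Short

section Flow
variable (G : Multigraph V E) [Fintype E] [DecidableEq E] [DecidableEq V]

/-- out-degree of `v` within edge set `F` -/
def outd (F : Finset E) (v : V) : ℕ := (F.filter fun e => G.tail e = v).card

/-- in-degree of `v` within edge set `F` -/
def ind (F : Finset E) (v : V) : ℕ := (F.filter fun e => G.head e = v).card

/-- balance of `v` -/
def bal (F : Finset E) (v : V) : ℤ := (G.outd F v : ℤ) - (G.ind F v : ℤ)

/-- `F` is a unit-capacity flow of value `k` from `s` to `t` -/
def IsFlowAt (s t : V) (F : Finset E) (k : ℕ) : Prop :=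
  ∀ v, G.bal F v = if v = s then (k : ℤ) else if v = t then -(k : ℤ) else 0

lemma isFlowAt_empty (s t : V) (hst : s ≠ t) : G.IsFlowAt s t ∅ 0 := by
  intro v; simp [bal, outd, ind]

lemma bal_insert (F : Finset E) (e : E) (he : e ∉ F) (v : V) :
    G.bal (insert e F) v = G.bal F v + (if G.tail e = v then 1 else 0)
      - (if G.head e = v then 1 else 0) := by
  have hni : ∀ (p : E → Prop) [DecidablePred p], e ∉ F.filter p :=
    fun p _ hc => he (Finset.mem_of_mem_filter e hc)
  unfold bal outd ind
  rw [Finset.filter_insert, Finset.filter_insert]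
  by_cases h1 : G.tail e = v <;> by_cases h2 : G.head e = v <;>
    simp only [h1, h2, if_pos, if_neg, if_true, if_false] <;>
    try rw [Finset.card_insert_of_notMem (hni _)] <;> try rw [Finset.card_insert_of_notMem (hni _)]
  all_goals try rw [Finset.card_insert_of_notMem (hni _)]
  all_goals push_cast; ring

lemma bal_erase (F : Finset E) (e : E) (he : e ∈ F) (v : V) :
    G.bal (F.erase e) v = G.bal F v - (if G.tail e = v then 1 else 0)
      + (if G.head e = v then 1 else 0) := by
  have h1 : F = insert e (F.erase e) := (Finset.insert_erase he).symm
  have h2 := G.bal_insert (F.erase e) e (Finset.notMem_erase e F) v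
  rw [← h1] at h2
  rw [h2]; ring

lemma sum_outd (F : Finset E) (T : Finset V) :
    ∑ v ∈ T, G.outd F v = (F.filter fun e => G.tail e ∈ T).card := by
  unfold outd
  rw [← Finset.card_biUnion]
  · congr 1
    ext e
    simp only [Finset.mem_biUnion, Finset.mem_filter]
    constructor
    · rintro ⟨v, hv, he, rfl⟩; exact ⟨he, hv⟩
    · rintro ⟨he, hv⟩; exact ⟨G.tail e, hv, he, rfl⟩
  · intro a _ b _ hab
    simp only [Finset.disjoint_left, Finset.mem_filter]
    rintro e ⟨_, rfl⟩ ⟨_, h⟩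
    exact hab h

lemma sum_ind (F : Finset E) (T : Finset V) :
    ∑ v ∈ T, G.ind F v = (F.filter fun e => G.head e ∈ T).card := by
  unfold ind
  rw [← Finset.card_biUnion]
  · congr 1
    ext e
    simp only [Finset.mem_biUnion, Finset.mem_filter]
    constructor
    · rintro ⟨v, hv, he, rfl⟩; exact ⟨he, hv⟩
    · rintro ⟨he, hv⟩; exact ⟨G.head e, hv, he, rfl⟩
  · intro a _ b _ hab
    simp only [Finset.disjoint_left, Finset.mem_filter]
    rintro e ⟨_, rfl⟩ ⟨_, h⟩
    exact hab h

lemma filter_split (F : Finset E) (p q : E → Prop) [DecidablePred p] [DecidablePred q] :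
    (F.filter p).card = (F.filter fun e => p e ∧ q e).card
      + (F.filter fun e => p e ∧ ¬ q e).card := by
  rw [← Finset.filter_filter, ← Finset.filter_filter]
  exact (Finset.card_filter_add_card_filter_not (s := F.filter p) q).symm

lemma sum_bal (F : Finset E) (T : Finset V) :
    ∑ v ∈ T, G.bal F v
      = ((F.filter fun e => G.tail e ∈ T ∧ G.head e ∉ T).card : ℤ)
        - ((F.filter fun e => G.head e ∈ T ∧ G.tail e ∉ T).card : ℤ) := by
  unfold bal
  rw [Finset.sum_sub_distrib, ← Nat.cast_sum, ← Nat.cast_sum, G.sum_outd, G.sum_ind]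
  rw [filter_split F (fun e => G.tail e ∈ T) (fun e => G.head e ∈ T),
      filter_split F (fun e => G.head e ∈ T) (fun e => G.tail e ∈ T)]
  have : (F.filter fun e => G.tail e ∈ T ∧ G.head e ∈ T)
      = (F.filter fun e => G.head e ∈ T ∧ G.tail e ∈ T) := by
    apply Finset.filter_congr; intro e _; exact and_comm
  rw [this]
  push_cast; ring

end Flow

section Trail
set_option linter.unusedSectionVars false
variable (G : Multigraph V E) [Fintype E] [DecidableEq E] [DecidableEq V]

lemma countP_nodup {α : Type*} [DecidableEq α] (L : List α) (h : L.Nodup)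
    (p : α → Prop) [DecidablePred p] :
    (L.countP fun e => p e) = (L.toFinset.filter p).card := by
  induction L with
  | nil => simp
  | cons x L ih =>
    simp only [List.countP_cons, List.toFinset_cons, List.nodup_cons] at *
    rw [Finset.filter_insert]
    by_cases hp : p x
    · rw [if_pos hp, Finset.card_insert_of_notMem (by simp [h.1]), ih h.2]
      simp [hp]
    · rw [if_neg hp, ih h.2]; simp [hp]

lemma length_le_card {α : Type*} [DecidableEq α] (L : List α) (h : L.Nodup)
    (F : Finset α) (hs : ∀ e ∈ L, e ∈ F) : L.length ≤ F.card := by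
  have h1 : L.toFinset.card = L.length := by rw [List.card_toFinset, h.dedup]
  rw [← h1]
  exact Finset.card_le_card (fun x hx => hs x (List.mem_toFinset.1 hx))

lemma extend_trail (F : Finset E) :
    ∀ (m : ℕ) (L : List E) (hne : L ≠ []), L.Nodup → (∀ e ∈ L, e ∈ F) →
    (L.Chain' fun e f => G.head e = G.tail f) → F.card ≤ L.length + m →
    ∃ (M : List E) (hne' : M ≠ []), M.Nodup ∧ (∀ e ∈ M, e ∈ F) ∧
      (M.Chain' fun e f => G.head e = G.tail f) ∧ M.head hne' = L.head hne ∧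
      (∀ e ∈ F, G.tail e = G.head (M.getLast hne') → e ∈ M) := by
  intro m
  induction m with
  | zero =>
    intro L hne hnd hsub hch hcard
    refine ⟨L, hne, hnd, hsub, hch, rfl, ?_⟩
    intro e heF het
    by_contra heL
    have : (e :: L).length ≤ F.card := by
      refine length_le_card _ (List.nodup_cons.2 ⟨heL, hnd⟩) F ?_
      intro f hf
      rcases List.mem_cons.1 hf with rfl | hf
      · exact heF
      · exact hsub f hf
    simp at this; omega
  | succ m ih =>
    intro L hne hnd hsub hch hcard
    by_cases hstuck : ∀ e ∈ F, G.tail e = G.head (L.getLast hne) → e ∈ L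
    · exact ⟨L, hne, hnd, hsub, hch, rfl, hstuck⟩
    · push_neg at hstuck
      obtain ⟨e, heF, het, heL⟩ := hstuck
      have hne' : L ++ [e] ≠ [] := by simp
      have hnd' : (L ++ [e]).Nodup := by
        rw [List.nodup_append]
        refine ⟨hnd, List.nodup_singleton e, ?_⟩
        intro a ha b hb
        simp only [List.mem_singleton] at hb
        subst hb; exact fun h => heL (h ▸ ha)
      have hsub' : ∀ f ∈ L ++ [e], f ∈ F := by
        intro f hf
        rcases List.mem_append.1 hf with hf | hf
        · exact hsub f hf
        · simp only [List.mem_singleton] at hf; subst hf; exact heF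
      have hch' : (L ++ [e]).Chain' fun e f => G.head e = G.tail f := by
        rw [List.Chain', List.isChain_append]
        refine ⟨hch, by simp, ?_⟩
        intro x hx y hy
        rw [List.getLast?_eq_getLast hne, Option.mem_some_iff] at hx
        simp only [List.head?_cons, Option.mem_some_iff] at hy
        subst hx; subst hy; exact het.symm
      obtain ⟨M, hMne, h1, h2, h3, h4, h5⟩ := ih (L ++ [e]) hne' hnd' hsub' hch'
        (by simp; omega)
      exact ⟨M, hMne, h1, h2, h3, by rw [h4, head_append' _ _ hne], h5⟩

lemma filter_sdiff' {α : Type*} [DecidableEq α] (F T : Finset α) (p : α → Prop)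
    [DecidablePred p] : (F \ T).filter p = F.filter p \ T.filter p := by
  ext a; simp only [Finset.mem_filter, Finset.mem_sdiff]; tauto

lemma decomp_step (s t : V) (hst : s ≠ t) (F : Finset E) (k : ℕ)
    (hF : G.IsFlowAt s t F (k + 1)) :
    ∃ w : G.Walk s t, w.edges.Nodup ∧ (∀ e ∈ w.edges, e ∈ F) ∧
      G.IsFlowAt s t (F \ w.edges.toFinset) k := by
  have hbals := hF s
  rw [if_pos rfl] at hbals
  have houtd : 1 ≤ G.outd F s := by
    unfold bal at hbals; omega
  obtain ⟨e₀, he₀F, he₀t⟩ : ∃ e₀ ∈ F, G.tail e₀ = s := by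
    obtain ⟨e, he⟩ := Finset.card_pos.1 houtd
    exact ⟨e, (Finset.mem_filter.1 he).1, (Finset.mem_filter.1 he).2⟩
  obtain ⟨M, hMne, hnd, hsub, hch, hhead, hstuck⟩ := G.extend_trail F F.card [e₀]
    (by simp) (List.nodup_singleton _) (by simpa) (List.isChain_singleton _) (by simp)
  have hheadt : G.tail (M.head hMne) = s := by rw [hhead]; simpa
  -- counting facts
  have hMsub : M.toFinset ⊆ F := fun e he => hsub e (List.mem_toFinset.1 he)
  have hcp_t : ∀ u, (M.countP fun e => G.tail e = u) = (M.toFinset.filter fun e => G.tail e = u).card :=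
    fun u => countP_nodup M hnd _
  have hcp_h : ∀ u, (M.countP fun e => G.head e = u) = (M.toFinset.filter fun e => G.head e = u).card :=
    fun u => countP_nodup M hnd _
  have hle_t : ∀ u, (M.countP fun e => G.tail e = u) ≤ G.outd F u := by
    intro u; rw [hcp_t u]
    exact Finset.card_le_card (Finset.filter_subset_filter _ hMsub)
  have hle_h : ∀ u, (M.countP fun e => G.head e = u) ≤ G.ind F u := by
    intro u; rw [hcp_h u]
    exact Finset.card_le_card (Finset.filter_subset_filter _ hMsub)
  set v := G.head (M.getLast hMne) with hv
  have hstuck_eq : (M.countP fun e => G.tail e = v) = G.outd F v := by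
    rw [hcp_t v]
    congr 1
    apply Finset.Subset.antisymm (Finset.filter_subset_filter _ hMsub)
    intro e he
    rw [Finset.mem_filter] at he ⊢
    exact ⟨List.mem_toFinset.2 (hstuck e he.1 he.2), he.2⟩
  have hident := G.count_identity M hMne hch
  have hvt : v = t := by
    by_contra hvt
    by_cases hvs : v = s
    · have h1 := hident s
      rw [hheadt, if_pos rfl, ← hv, hvs, if_pos rfl] at h1
      have h2 := hle_h s
      have h3 : (M.countP fun e => G.tail e = s) = G.outd F s := hvs ▸ hstuck_eq
      unfold bal at hbals
      omega
    · have h1 := hident v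
      rw [hheadt, if_neg (fun hc => hvs hc.symm), ← hv, if_pos rfl] at h1
      have h2 := hle_h v
      have h3 := hstuck_eq
      have h4 := hF v
      rw [if_neg hvs, if_neg hvt] at h4
      unfold bal at h4
      omega
  have hflow' : G.IsFlowAt s t (F \ M.toFinset) k := by
    intro u
    have e1 : G.outd (F \ M.toFinset) u + (M.countP fun e => G.tail e = u) = G.outd F u := by
      unfold outd
      rw [filter_sdiff', Finset.card_sdiff_of_subset (Finset.filter_subset_filter _ hMsub), hcp_t u]
      have := Finset.card_le_card (Finset.filter_subset_filter (fun e => G.tail e = u) hMsub)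
      omega
    have e2 : G.ind (F \ M.toFinset) u + (M.countP fun e => G.head e = u) = G.ind F u := by
      unfold ind
      rw [filter_sdiff', Finset.card_sdiff_of_subset (Finset.filter_subset_filter _ hMsub), hcp_h u]
      have := Finset.card_le_card (Finset.filter_subset_filter (fun e => G.head e = u) hMsub)
      omega
    have e3 := hident u
    rw [hheadt, ← hv, hvt] at e3
    have e4 := hF u
    unfold bal at e4 ⊢
    by_cases hus : u = s
    · subst hus
      rw [if_pos rfl] at e4 ⊢
      rw [if_pos rfl, if_neg (Ne.symm hst)] at e3
      omega
    · by_cases hut : u = t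
      · subst hut
        rw [if_neg hus, if_pos rfl] at e4 ⊢
        rw [if_neg (fun h => hus h.symm), if_pos rfl] at e3
        omega
      · rw [if_neg hus, if_neg hut] at e4 ⊢
        rw [if_neg (fun h => hus h.symm), if_neg (fun h => hut h.symm)] at e3
        omega
  exact ⟨⟨M, hMne, hheadt, hvt ▸ hv.symm, hch⟩, hnd, hsub, hflow'⟩

lemma no_edge_out_t (s t : V) (hst : s ≠ t) (F : Finset E) (k : ℕ)
    (hF : G.IsFlowAt s t F k)
    (hmin : ∀ F' : Finset E, G.IsFlowAt s t F' k → F.card ≤ F'.card) :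
    ∀ e ∈ F, G.tail e ≠ t := by
  intro e₀ he₀F he₀t
  obtain ⟨M, hMne, hnd, hsub, hch, hhead, hstuck⟩ := G.extend_trail F F.card [e₀]
    (by simp) (List.nodup_singleton _) (by simpa) (List.isChain_singleton _) (by simp)
  have hheadt : G.tail (M.head hMne) = t := by rw [hhead]; simpa
  have hMsub : M.toFinset ⊆ F := fun e he => hsub e (List.mem_toFinset.1 he)
  have hcp_t : ∀ u, (M.countP fun e => G.tail e = u) = (M.toFinset.filter fun e => G.tail e = u).card :=
    fun u => countP_nodup M hnd _
  have hcp_h : ∀ u, (M.countP fun e => G.head e = u) = (M.toFinset.filter fun e => G.head e = u).card :=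
    fun u => countP_nodup M hnd _
  have hle_h : ∀ u, (M.countP fun e => G.head e = u) ≤ G.ind F u := by
    intro u; rw [hcp_h u]
    exact Finset.card_le_card (Finset.filter_subset_filter _ hMsub)
  set v := G.head (M.getLast hMne) with hv
  have hstuck_eq : (M.countP fun e => G.tail e = v) = G.outd F v := by
    rw [hcp_t v]
    congr 1
    apply Finset.Subset.antisymm (Finset.filter_subset_filter _ hMsub)
    intro e he
    rw [Finset.mem_filter] at he ⊢
    exact ⟨List.mem_toFinset.2 (hstuck e he.1 he.2), he.2⟩
  have hident := G.count_identity M hMne hch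
  have hvt : v = t := by
    by_contra hvt
    by_cases hvs : v = s
    · have h1 := hident v
      rw [hheadt, if_neg (fun hc => hvt hc.symm), ← hv, if_pos rfl] at h1
      have h2 := hle_h v
      have h3 := hstuck_eq
      have h4 := hF v
      rw [if_pos hvs] at h4
      unfold bal at h4
      omega
    · have h1 := hident v
      rw [hheadt, if_neg (fun hc => hvt hc.symm), ← hv, if_pos rfl] at h1
      have h2 := hle_h v
      have h3 := hstuck_eq
      have h4 := hF v
      rw [if_neg hvs, if_neg hvt] at h4
      unfold bal at h4
      omega
  -- removing the closed trail M keeps the flow value but lowers the cardinality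
  have hflow' : G.IsFlowAt s t (F \ M.toFinset) k := by
    intro u
    have e1 : G.outd (F \ M.toFinset) u + (M.countP fun e => G.tail e = u) = G.outd F u := by
      unfold outd
      rw [filter_sdiff', Finset.card_sdiff_of_subset (Finset.filter_subset_filter _ hMsub), hcp_t u]
      have := Finset.card_le_card (Finset.filter_subset_filter (fun e => G.tail e = u) hMsub)
      omega
    have e2 : G.ind (F \ M.toFinset) u + (M.countP fun e => G.head e = u) = G.ind F u := by
      unfold ind
      rw [filter_sdiff', Finset.card_sdiff_of_subset (Finset.filter_subset_filter _ hMsub), hcp_h u]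
      have := Finset.card_le_card (Finset.filter_subset_filter (fun e => G.head e = u) hMsub)
      omega
    have e3 := hident u
    rw [hheadt, ← hv, hvt] at e3
    have e4 := hF u
    unfold bal at e4 ⊢
    omega
  have hlt : (F \ M.toFinset).card < F.card := by
    apply Finset.card_lt_card
    rw [Finset.ssubset_iff_of_subset (Finset.sdiff_subset)]
    refine ⟨e₀, he₀F, ?_⟩
    rw [Finset.mem_sdiff]
    intro ⟨_, hc⟩
    apply hc
    rw [List.mem_toFinset]
    have he : M.head hMne = e₀ := by simpa using hhead
    exact he ▸ List.head_mem hMne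
  exact absurd (hmin _ hflow') (by omega)

lemma flow_paths (s t : V) (hst : s ≠ t) :
    ∀ (k : ℕ) (F : Finset E), G.IsFlowAt s t F k →
    ∃ P : Fin k → G.Walk s t, (∀ i, ∀ e ∈ (P i).edges, e ∈ F) ∧
      ∀ i j, i ≠ j → ∀ e, e ∈ (P i).edges → e ∉ (P j).edges := by
  intro k
  induction k with
  | zero =>
    intro F _
    exact ⟨Fin.elim0, fun i => i.elim0, fun i => i.elim0⟩
  | succ k ih =>
    intro F hF
    obtain ⟨w, hnd, hsub, hF'⟩ := G.decomp_step s t hst F k hF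
    obtain ⟨P', hP1, hP2⟩ := ih _ hF'
    have hdisj : ∀ j, ∀ e, e ∈ w.edges → e ∉ (P' j).edges := by
      intro j e he hc
      have := hP1 j e hc
      rw [Finset.mem_sdiff] at this
      exact this.2 (List.mem_toFinset.2 he)
    refine ⟨Fin.cons w P', ?_, ?_⟩
    · intro i
      refine Fin.cases ?_ ?_ i
      · simpa using hsub
      · intro j
        simp only [Fin.cons_succ]
        intro e he
        exact (Finset.mem_sdiff.1 (hP1 j e he)).1
    · intro i j hij
      rcases Fin.eq_zero_or_eq_succ i with rfl | ⟨i', rfl⟩ <;>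
        rcases Fin.eq_zero_or_eq_succ j with rfl | ⟨j', rfl⟩
      · exact absurd rfl hij
      · simp only [Fin.cons_zero, Fin.cons_succ]
        exact hdisj j'
      · simp only [Fin.cons_zero, Fin.cons_succ]
        intro e he hc
        exact hdisj i' e hc he
      · simp only [Fin.cons_succ]
        exact hP2 i' j' (fun hc => hij (by rw [hc]))

end Trail

section Augment
set_option linter.unusedSectionVars false
variable (G : Multigraph V E) [Fintype E] [DecidableEq E] [DecidableEq V]

/-- residual step relation of a flow -/
def Step (F : Finset E) (u w : V) : Prop :=
  (∃ e, e ∉ F ∧ G.tail e = u ∧ G.head e = w) ∨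
  (∃ e, e ∈ F ∧ G.tail e = w ∧ G.head e = u)

lemma chain_imp_mem {α : Type*} {r r' : α → α → Prop} :
    ∀ (l : List α) (c : α), List.Chain r c l →
    (∀ x y, x ∈ c :: l → y ∈ c :: l → r x y → r' x y) → List.Chain r' c l := by
  intro l
  induction l with
  | nil => intro c _ _; exact List.Chain.nil
  | cons d l₂ ih =>
    intro c hch himp
    rw [List.Chain, List.chain_cons] at hch ⊢
    refine ⟨himp c d (by simp) (by simp) hch.1, ih d hch.2 ?_⟩
    intro x y hx hy
    exact himp x y (List.mem_cons_of_mem _ hx) (List.mem_cons_of_mem _ hy)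

lemma step_toggle (F : Finset E) (v w : V) (hstep : G.Step F v w) (hvw : v ≠ w) :
    ∃ F₁ : Finset E,
      (∀ u, G.bal F₁ u = G.bal F u + (if u = v then 1 else 0) - (if u = w then 1 else 0)) ∧
      (∀ x y, x ≠ v → y ≠ v → G.Step F x y → G.Step F₁ x y) := by
  rcases hstep with ⟨e, heF, ht, hh⟩ | ⟨e, heF, ht, hh⟩
  · refine ⟨insert e F, ?_, ?_⟩
    · intro u
      rw [G.bal_insert F e heF u]
      have hq1 : (if G.tail e = u then (1:ℤ) else 0) = if u = v then 1 else 0 := by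
        rw [ht]; by_cases h : u = v
        · simp [h]
        · rw [if_neg (Ne.symm h), if_neg h]
      have hq2 : (if G.head e = u then (1:ℤ) else 0) = if u = w then 1 else 0 := by
        rw [hh]; by_cases h : u = w
        · simp [h]
        · rw [if_neg (Ne.symm h), if_neg h]
      rw [hq1, hq2]
    · intro x y hx _ hstep'
      rcases hstep' with ⟨e', h1, h2, h3⟩ | ⟨e', h1, h2, h3⟩
      · left
        refine ⟨e', ?_, h2, h3⟩
        intro hc
        rcases Finset.mem_insert.1 hc with rfl | hc'
        · exact hx (by rw [← h2, ht])
        · exact h1 hc'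
      · exact Or.inr ⟨e', Finset.mem_insert_of_mem h1, h2, h3⟩
  · refine ⟨F.erase e, ?_, ?_⟩
    · intro u
      rw [G.bal_erase F e heF u]
      have h1 : (if G.tail e = u then (1:ℤ) else 0) = if u = w then 1 else 0 := by
        rw [ht]; by_cases h : u = w
        · simp [h]
        · rw [if_neg (Ne.symm h), if_neg h]
      have h2 : (if G.head e = u then (1:ℤ) else 0) = if u = v then 1 else 0 := by
        rw [hh]; by_cases h : u = v
        · simp [h]
        · rw [if_neg (Ne.symm h), if_neg h]
      rw [h1, h2]; ring
    · intro x y hx _ hstep'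
      rcases hstep' with ⟨e', h1, h2, h3⟩ | ⟨e', h1, h2, h3⟩
      · left
        exact ⟨e', fun hc => h1 (Finset.mem_of_mem_erase hc), h2, h3⟩
      · right
        refine ⟨e', Finset.mem_erase.2 ⟨?_, h1⟩, h2, h3⟩
        intro hc
        subst hc
        exact hx (by rw [← h3, hh])

lemma augment (b : V) :
    ∀ (l : List V) (F : Finset E) (v : V), List.Chain (G.Step F) v l →
    (v :: l).Nodup → l.getLast? = some b →
    ∃ F' : Finset E, ∀ u, G.bal F' u = G.bal F u
      + (if u = v then 1 else 0) - (if u = b then 1 else 0) := by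
  intro l
  induction l with
  | nil => intro F v _ _ h; simp at h
  | cons w l₂ ih =>
    intro F v hch hnd hlast
    rw [List.Chain, List.chain_cons] at hch
    have hvw : v ≠ w := by
      intro hc; subst hc
      simp at hnd
    obtain ⟨F₁, hb1, htr⟩ := G.step_toggle F v w hch.1 hvw
    rcases eq_or_ne l₂ [] with rfl | hl₂
    · simp only [List.getLast?_singleton, Option.some_inj] at hlast
      subst hlast
      exact ⟨F₁, hb1⟩
    · have hch₂ : List.Chain (G.Step F₁) w l₂ := by
        refine chain_imp_mem l₂ w hch.2 ?_
        intro x y hx hy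
        refine htr x y ?_ ?_
        · intro hc; subst hc
          simp only [List.nodup_cons] at hnd
          exact hnd.1 hx
        · intro hc; subst hc
          simp only [List.nodup_cons] at hnd
          exact hnd.1 hy
      have hnd₂ : (w :: l₂).Nodup := (List.nodup_cons.1 hnd).2
      have hlast₂ : l₂.getLast? = some b := by
        have hg := List.getLast?_eq_getLast hl₂
        rw [List.getLast?_cons, hg] at hlast
        simp only [Option.getD_some, Option.some_inj] at hlast
        rw [hg, hlast]
      obtain ⟨F₂, hb2⟩ := ih F₁ w hch₂ hnd₂ hlast₂
      refine ⟨F₂, fun u => ?_⟩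
      rw [hb2 u, hb1 u]
      ring
end Augment

section SimpleChain
variable {α : Type*}

lemma chain_suffix (r : α → α → Prop) (a b : α) :
    ∀ (l : List α) (c : α), List.Chain r c l → (c :: l).Nodup → a ∈ c :: l →
    (c :: l).getLast? = some b → a ≠ b →
    ∃ l', l' ≠ [] ∧ List.Chain r a l' ∧ (a :: l').Nodup ∧ l'.getLast? = some b := by
  intro l
  induction l with
  | nil =>
    intro c _ _ ha hlast hab
    simp only [List.mem_singleton] at ha
    simp only [List.getLast?_singleton, Option.some_inj] at hlast
    exact absurd (ha.trans hlast) hab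
  | cons d l₂ ih =>
    intro c hch hnd ha hlast hab
    rw [List.Chain, List.chain_cons] at hch
    rcases List.mem_cons.1 ha with rfl | ha'
    · refine ⟨d :: l₂, by simp, ?_, hnd, ?_⟩
      · rw [List.Chain, List.chain_cons]; exact hch
      · rwa [List.getLast?_cons_cons] at hlast
    · exact ih d hch.2 (List.nodup_cons.1 hnd).2 ha'
        (by rwa [List.getLast?_cons_cons] at hlast) hab

lemma exists_simple_chain (r : α → α → Prop) {a b : α}
    (h : Relation.ReflTransGen r a b) (hab : a ≠ b) :
    ∃ l, List.Chain r a l ∧ (a :: l).Nodup ∧ l.getLast? = some b := by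
  have H : ∀ x, Relation.ReflTransGen r x b →
      x = b ∨ ∃ l, List.Chain r x l ∧ (x :: l).Nodup ∧ l.getLast? = some b := by
    intro x hx
    induction hx using Relation.ReflTransGen.head_induction_on with
    | refl => exact Or.inl rfl
    | head hac hcb ihc =>
      rename_i x c
      by_cases hxb : x = b
      · exact Or.inl hxb
      right
      rcases ihc with hcb' | ⟨l, hch, hnd, hlast⟩
      · refine ⟨[c], by simp [List.Chain, hac], by simp only [List.nodup_cons, List.mem_singleton, List.not_mem_nil, not_false_iff, List.nodup_nil, and_true]; exact fun hq => hxb (hq.trans hcb'), by simp [hcb']⟩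
      · have hl : l ≠ [] := by rintro rfl; simp at hlast
        by_cases hxm : x ∈ c :: l
        · have hlast' : (c :: l).getLast? = some b := by
            rw [List.getLast?_cons, hlast]; simp
          obtain ⟨l', _, h1, h2, h3⟩ := chain_suffix r x b l c hch hnd hxm hlast' hxb
          exact ⟨l', h1, h2, h3⟩
        · refine ⟨c :: l, ?_, List.nodup_cons.2 ⟨hxm, hnd⟩, ?_⟩
          · rw [List.Chain, List.chain_cons]; exact ⟨hac, hch⟩
          · rw [List.getLast?_cons, hlast]; simp
  rcases H a h with rfl | hres
  · exact absurd rfl hab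
  · exact hres

end SimpleChain

section MaxFlow
set_option linter.unusedSectionVars false
variable (G : Multigraph V E) [Fintype E] [DecidableEq E] [DecidableEq V]

lemma flow_value_le (s t : V) (F : Finset E) (k : ℕ) (hF : G.IsFlowAt s t F k) :
    k ≤ Fintype.card E := by
  have h := hF s
  rw [if_pos rfl] at h
  unfold bal at h
  have h1 : G.outd F s ≤ Fintype.card E := by
    refine le_trans (Finset.card_le_card (Finset.filter_subset _ _)) ?_
    exact le_trans (Finset.card_le_card (Finset.subset_univ F)) (le_of_eq (Finset.card_univ))
  omega

lemma exists_maxflow (s t : V) (hst : s ≠ t) :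
    ∃ (k : ℕ) (F : Finset E), G.IsFlowAt s t F k ∧
      (∀ F', G.IsFlowAt s t F' k → F.card ≤ F'.card) ∧
      ¬ Relation.ReflTransGen (G.Step F) s t := by
  classical
  set P : ℕ → Prop := fun k => ∃ F : Finset E, G.IsFlowAt s t F k with hP
  have hP0 : P 0 := ⟨∅, G.isFlowAt_empty s t hst⟩
  set k := Nat.findGreatest P (Fintype.card E) with hk
  have hPk : P k := Nat.findGreatest_spec (Nat.zero_le _) hP0
  obtain ⟨F₀, hF₀⟩ := hPk
  -- minimum cardinality flow of value k
  have hne : (Finset.univ.filter fun F : Finset E => G.IsFlowAt s t F k).Nonempty :=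
    ⟨F₀, by simp [hF₀]⟩
  obtain ⟨F, hFmem, hFmin⟩ := Finset.exists_min_image _ Finset.card hne
  rw [Finset.mem_filter] at hFmem
  have hF : G.IsFlowAt s t F k := hFmem.2
  refine ⟨k, F, hF, ?_, ?_⟩
  · intro F' hF'
    exact hFmin F' (by simp [hF'])
  · intro hreach
    obtain ⟨l, hch, hnd, hlast⟩ := exists_simple_chain (G.Step F) hreach hst
    obtain ⟨F', hbal'⟩ := G.augment t l F s hch hnd hlast
    have hF' : G.IsFlowAt s t F' (k + 1) := by
      intro u
      rw [hbal' u]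
      have := hF u
      by_cases hus : u = s
      · subst hus
        rw [if_pos rfl] at this ⊢
        rw [this, if_pos rfl, if_neg hst]
        push_cast; ring
      · by_cases hut : u = t
        · subst hut
          rw [if_neg hus, if_pos rfl] at this ⊢
          rw [this, if_neg hus, if_pos rfl]
          push_cast; ring
        · rw [if_neg hus, if_neg hut] at this ⊢
          rw [this, if_neg hus, if_neg hut]
          ring
    have hbound := G.flow_value_le s t F' (k+1) hF'
    have := Nat.findGreatest_is_greatest (show k < k + 1 by omega) hbound
    exact this ⟨F', hF'⟩

lemma cut_card (s t : V) (hst : s ≠ t) (F : Finset E) (k : ℕ)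
    (hF : G.IsFlowAt s t F k) (T' : Finset V) (hs : s ∈ T') (ht : t ∉ T')
    (hrev : (F.filter fun e => G.head e ∈ T' ∧ G.tail e ∉ T') = ∅) :
    ((F.filter fun e => G.tail e ∈ T' ∧ G.head e ∉ T').card : ℤ) = k := by
  have hsum := G.sum_bal F T'
  rw [hrev] at hsum
  have hsum2 : ∑ v ∈ T', G.bal F v = k := by
    rw [Finset.sum_eq_single_of_mem s hs]
    · rw [hF s, if_pos rfl]
    · intro v hv hvs
      rw [hF v, if_neg hvs, if_neg (fun hc => ht (by rw [← hc]; exact hv))]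
  rw [hsum2] at hsum
  simp at hsum
  omega

end MaxFlow






end Multigraph


namespace Multigraph
section Broadcast
set_option linter.unusedSectionVars false
variable (G : Multigraph V E) [DecidableEq V] {s : V}

@[simp] lemma broadcast_tail_inl (e : E) :
    (G.broadcast s).tail (Sum.inl e)
      = if h : G.tail e = s then Sum.inl s else Sum.inr ⟨G.tail e, h⟩ := rfl

@[simp] lemma broadcast_head_inl (e : E) :
    (G.broadcast s).head (Sum.inl e) = Sum.inl (G.head e) := rfl

@[simp] lemma broadcast_tail_inr (u : {u : V // u ≠ s}) :
    (G.broadcast s).tail (Sum.inr u) = Sum.inl u.1 := rfl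

@[simp] lemma broadcast_head_inr (u : {u : V // u ≠ s}) :
    (G.broadcast s).head (Sum.inr u) = Sum.inr u := rfl

/-- projection of split vertices -/
def bproj : (V ⊕ {u : V // u ≠ s}) → V := Sum.elim id Subtype.val

@[simp] lemma bproj_inl (v : V) : bproj (s := s) (Sum.inl v) = v := rfl
@[simp] lemma bproj_inr (u : {u : V // u ≠ s}) : bproj (s := s) (Sum.inr u) = u.1 := rfl

lemma bproj_tail_inl (e : E) :
    bproj ((G.broadcast s).tail (Sum.inl e)) = G.tail e := by
  rw [broadcast_tail_inl]
  by_cases h : G.tail e = s <;> simp [h]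

/-- pulling back a broadcast chain -/
lemma pull_chain :
    ∀ (L : List (E ⊕ {u : V // u ≠ s})) (hne : L ≠ []),
    (L.Chain' fun e f => (G.broadcast s).head e = (G.broadcast s).tail f) →
    ∀ (a c : V), bproj ((G.broadcast s).tail (L.head hne)) = a →
    (G.broadcast s).head (L.getLast hne) = Sum.inl c →
    ∃ (M : List E) (hne' : M ≠ []),
      M = L.filterMap (Sum.elim some fun _ => none) ∧
      (M.Chain' fun e f => G.head e = G.tail f) ∧
      G.tail (M.head hne') = a ∧ G.head (M.getLast hne') = c := by
  intro L
  induction L with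
  | nil => simp
  | cons x L ih =>
    intro hne hch a c hhd hlst
    rcases eq_or_ne L [] with rfl | hL
    · rcases x with e | u
      · simp only [List.getLast_singleton, broadcast_head_inl, Sum.inl.injEq] at hlst
        simp only [List.head_cons, G.bproj_tail_inl] at hhd
        refine ⟨[e], by simp, by simp, List.isChain_singleton _, by simpa using hhd, by simpa using hlst⟩
      · simp only [List.getLast_singleton, broadcast_head_inr] at hlst
        exact absurd hlst (by simp)
    · have hch' : L.Chain' fun e f => (G.broadcast s).head e = (G.broadcast s).tail f :=
        hch.tail
      have hrel : (G.broadcast s).head x = (G.broadcast s).tail (L.head hL) := by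
        have := List.isChain_cons.1 hch |>.1
        exact this _ (by rw [List.head?_eq_head hL]; rfl)
      have hlst' : (G.broadcast s).head (L.getLast hL) = Sum.inl c := by
        rwa [List.getLast_cons hL] at hlst
      rcases x with e | u
      · -- original edge
        have hstep : bproj ((G.broadcast s).tail (L.head hL)) = G.head e := by
          rw [← hrel]; simp
        obtain ⟨M', hne', hMeq, hMch, hMhd, hMlst⟩ := ih hL hch' (G.head e) c hstep hlst'
        refine ⟨e :: M', by simp, ?_, ?_, ?_, ?_⟩
        · rw [List.filterMap_cons]
          simp only [Sum.elim_inl]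
          rw [hMeq]
        · rw [List.Chain', List.isChain_cons]
          refine ⟨?_, hMch⟩
          intro y hy
          rw [List.head?_eq_head hne', Option.mem_some_iff] at hy
          subst hy
          exact hMhd.symm
        · simp only [List.head_cons]
          rw [← G.bproj_tail_inl (s := s) e]
          simpa using hhd
        · rw [List.getLast_cons hne']
          exact hMlst
      · -- split edge: skipped by filterMap
        have hstep : bproj ((G.broadcast s).tail (L.head hL)) = a := by
          rw [← hrel]
          simp only [broadcast_head_inr, bproj_inr]
          simpa using hhd
        obtain ⟨M', hne', hMeq, hMch, hMhd, hMlst⟩ := ih hL hch' a c hstep hlst'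
        refine ⟨M', hne', ?_, hMch, hMhd, hMlst⟩
        rw [List.filterMap_cons]
        simp only [Sum.elim_inr]
        exact hMeq

/-- pulling back a broadcast walk -/
lemma pull_walk {t : V} (hw : (G.broadcast s).Walk (Sum.inl s) (Sum.inl t)) :
    ∃ w : G.Walk s t, w.edges = hw.edges.filterMap (Sum.elim some fun _ => none) := by
  obtain ⟨M, hne', hMeq, hMch, hMhd, hMlst⟩ :=
    G.pull_chain hw.edges hw.ne hw.chain s t (by rw [hw.first]; simp) hw.last
  exact ⟨⟨M, hne', hMhd, hMlst, hMch⟩, hMeq⟩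

/-- an original edge of a pulled-back walk lies in the broadcast walk -/
lemma mem_filterMap_elim (e : E) (L : List (E ⊕ {u : V // u ≠ s})) :
    e ∈ L.filterMap (Sum.elim some fun _ => none) ↔ Sum.inl e ∈ L := by
  rw [List.mem_filterMap]
  constructor
  · rintro ⟨x, hx, hfx⟩
    rcases x with f | u
    · simp only [Sum.elim_inl, Option.some_inj] at hfx
      subst hfx; exact hx
    · simp at hfx
  · intro h
    exact ⟨Sum.inl e, h, rfl⟩

/-- split-edge membership: internal vertices force use of the split edge -/
lemma split_edge_mem {t : V} (hst : s ≠ t) (hw : (G.broadcast s).Walk (Sum.inl s) (Sum.inl t))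
    (e : E) (he : Sum.inl e ∈ hw.edges) (hnt : G.head e ≠ t) (hns : G.head e ≠ s) :
    Sum.inr ⟨G.head e, hns⟩ ∈ hw.edges := by
  have hlast : Sum.inl e ≠ hw.edges.getLast hw.ne := by
    intro hc
    have := hw.last
    rw [← hc] at this
    simp only [broadcast_head_inl, Sum.inl.injEq] at this
    exact hnt this
  obtain ⟨f, hf, hrel⟩ := exists_next (G.broadcast s) hw.edges hw.ne hw.chain _ he hlast
  rcases f with g | u
  · rw [broadcast_head_inl, broadcast_tail_inl] at hrel
    by_cases h : G.tail g = s
    · rw [dif_pos h] at hrel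
      exact absurd (Sum.inl.inj hrel) hns
    · rw [dif_neg h] at hrel
      exact absurd hrel (by simp)
  · rw [broadcast_head_inl, broadcast_tail_inr] at hrel
    have : u = ⟨G.head e, hns⟩ := Subtype.ext (Sum.inl.inj hrel).symm
    rwa [this] at hf

end Broadcast
end Multigraph


namespace Multigraph
section Final
set_option linter.unusedSectionVars false
variable (G : Multigraph V E) [Fintype V] [Fintype E] [DecidableEq V]

lemma hid_zero (s t : V) : G.HasIntDisjoint s t 0 :=
  ⟨Fin.elim0, fun i => i.elim0⟩

lemma hid_le (s t : V) (k : ℕ) (h : G.HasIntDisjoint s t k) : k ≤ Fintype.card E := by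
  obtain ⟨P, hP⟩ := h
  have hinj : Function.Injective (fun i => (P i).edges.head (P i).ne) := by
    intro i j hij
    by_contra hne
    have h2 := (hP i j hne).2
    have hmem : (P i).edges.head (P i).ne ∈ ((P i).edgeSet ∩ (P j).edgeSet : Set E) := by
      refine ⟨List.head_mem _, ?_⟩
      show (P i).edges.head (P i).ne ∈ (P j).edges
      rw [show (P i).edges.head (P i).ne = (P j).edges.head (P j).ne from hij]
      exact List.head_mem _
    rw [h2] at hmem
    exact hmem
  calc k = Fintype.card (Fin k) := (Fintype.card_fin k).symm
  _ ≤ Fintype.card E := Fintype.card_le_of_injective _ hinj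

lemma easy_direction (s t : V) (k : ℕ) (h : G.HasIntDisjoint s t k)
    (S : Finset V) (hsS : s ∈ S) (htS : t ∉ S) (hstail : s ∉ G.tailSet S) :
    k ≤ (G.tailSet S).card := by
  obtain ⟨P, hP⟩ := h
  have hx : ∀ i : Fin k, ∃ e ∈ (P i).edges, G.tail e ∈ (S : Set V) ∧ G.head e ∉ (S : Set V) := by
    intro i
    refine G.exists_crossing (↑S) (P i).edges (P i).ne (P i).chain ?_ ?_
    · rw [(P i).first]; exact hsS
    · rw [(P i).last]; exact htS
  choose e he hcross using hx
  have hmemT : ∀ i, G.tail (e i) ∈ G.tailSet S := by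
    intro i
    apply Finset.mem_image_of_mem
    rw [cutE, Finset.mem_filter]
    exact ⟨Finset.mem_univ _, (hcross i).1, (hcross i).2⟩
  have hne_s : ∀ i, G.tail (e i) ≠ s := by
    intro i hc
    exact hstail (hc ▸ hmemT i)
  have hint : ∀ i, G.tail (e i) ∈ (P i).internals := by
    intro i
    rcases G.tail_mem_internal (P i).edges (P i).ne (P i).chain (e i) (he i) with
      hcase | ⟨f, hf, hfh⟩
    · rw [(P i).first] at hcase; exact absurd hcase (hne_s i)
    · exact ⟨f, hf, hfh⟩
  have hinjOn : Set.InjOn (fun i => G.tail (e i)) ↑(Finset.univ : Finset (Fin k)) := by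
    intro i _ j _ hij
    have hij' : G.tail (e i) = G.tail (e j) := hij
    by_contra hne
    have h1 := (hP i j hne).1
    have : G.tail (e i) ∈ ((P i).internals ∩ (P j).internals : Set V) :=
      ⟨hint i, by rw [hij']; exact hint j⟩
    rw [h1] at this
    exact this
  have := Finset.card_le_card_of_injOn (fun i => G.tail (e i))
    (fun i _ => hmemT i) hinjOn
  simpa using this

lemma flow_disjoint (s t : V) (hst : s ≠ t) (k : ℕ)
    (F : Finset (E ⊕ {u : V // u ≠ s}))
    (hF : (G.broadcast s).IsFlowAt (Sum.inl s) (Sum.inl t) F k) :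
    G.HasIntDisjoint s t k := by
  classical
  have hst' : (Sum.inl s : V ⊕ {u : V // u ≠ s}) ≠ Sum.inl t :=
    fun hc => hst (Sum.inl.inj hc)
  obtain ⟨P, hP1, hP2⟩ := (G.broadcast s).flow_paths _ _ hst' k F hF
  have hQ : ∀ i : Fin k, ∃ w : G.Walk s t,
      (∀ e ∈ w.edges, Sum.inl e ∈ (P i).edges) ∧ s ∉ w.internals ∧ t ∉ w.internals := by
    intro i
    obtain ⟨w0, hw0⟩ := G.pull_walk (P i)
    obtain ⟨w, hsub, hs', ht'⟩ := exists_short w0.edges.length w0 le_rfl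
    refine ⟨w, ?_, hs', ht'⟩
    intro e he
    have := hsub e he
    rw [hw0] at this
    exact (mem_filterMap_elim e _).1 this
  choose Q hQsub hQs hQt using hQ
  refine ⟨Q, ?_⟩
  intro i j hij
  constructor
  · rw [Set.eq_empty_iff_forall_notMem]
    rintro v ⟨⟨e1, he1, hh1⟩, ⟨e2, he2, hh2⟩⟩
    subst hh1
    have hvs : G.head e1 ≠ s := fun hc => hQs i ⟨e1, he1, hc⟩
    have hvt : G.head e1 ≠ t := fun hc => hQt i ⟨e1, he1, hc⟩
    have hm1 : Sum.inl e1 ∈ (P i).edges :=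
      hQsub i e1 ((List.dropLast_sublist _).subset he1)
    have hm2 : Sum.inl e2 ∈ (P j).edges :=
      hQsub j e2 ((List.dropLast_sublist _).subset he2)
    have hs1 : Sum.inr ⟨G.head e1, hvs⟩ ∈ (P i).edges :=
      G.split_edge_mem hst (P i) e1 hm1 hvt hvs
    have hvs2 : G.head e2 ≠ s := fun hc => hvs (hh2.symm.trans hc)
    have hvt2 : G.head e2 ≠ t := fun hc => hvt (hh2.symm.trans hc)
    have hs2 : Sum.inr ⟨G.head e2, hvs2⟩ ∈ (P j).edges :=
      G.split_edge_mem hst (P j) e2 hm2 hvt2 hvs2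
    have heq : (⟨G.head e2, hvs2⟩ : {u : V // u ≠ s}) = ⟨G.head e1, hvs⟩ :=
      Subtype.ext hh2
    rw [heq] at hs2
    exact hP2 i j hij _ hs1 hs2
  · rw [Set.eq_empty_iff_forall_notMem]
    rintro e ⟨he1, he2⟩
    exact hP2 i j hij (Sum.inl e) (hQsub i e he1) (hQsub j e he2)

end Final
end Multigraph

-- ===AUX END===

open Multigraph

/-- For nonadjacent `s, t`, the maximum number of pairwise
internally-disjoint `s`-`t` paths equals the minimum of `|tail([S,S̄])|` over
all `s,t`-edge cuts `[S,S̄]` with `s ∉ tail([S,S̄])`. -/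
theorem stmt2 {V E : Type} [Fintype V] [Fintype E] [DecidableEq V]
    (G : Multigraph V E) (s t : V) (hst : s ≠ t) (hna : G.Nonadjacent s t) :
    ∃ n : ℕ,
      (G.HasIntDisjoint s t n ∧ ∀ k, G.HasIntDisjoint s t k → k ≤ n) ∧
      (∃ S : Finset V, s ∈ S ∧ t ∉ S ∧ s ∉ G.tailSet S ∧ (G.tailSet S).card = n) ∧
      (∀ S : Finset V, s ∈ S → t ∉ S → s ∉ G.tailSet S → n ≤ (G.tailSet S).card) := by
  classical
  set n := Nat.findGreatest (G.HasIntDisjoint s t) (Fintype.card E) with hn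
  have hn1 : G.HasIntDisjoint s t n :=
    Nat.findGreatest_spec (Nat.zero_le _) (G.hid_zero s t)
  have hn2 : ∀ k, G.HasIntDisjoint s t k → k ≤ n := by
    intro k hk
    by_contra hlt
    push_neg at hlt
    exact absurd hk (Nat.findGreatest_is_greatest hlt (G.hid_le s t k hk))
  have hst' : (Sum.inl s : V ⊕ {u : V // u ≠ s}) ≠ Sum.inl t :=
    fun hc => hst (Sum.inl.inj hc)
  obtain ⟨m, F, hF, hFmin, hnoaug⟩ :=
    (G.broadcast s).exists_maxflow (Sum.inl s) (Sum.inl t) hst'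
  have hm_le_n : m ≤ n := hn2 m (G.flow_disjoint s t hst m F hF)
  -- the residual-reachable set
  set T' : Finset (V ⊕ {u : V // u ≠ s}) :=
    Finset.univ.filter
      (fun v => Relation.ReflTransGen ((G.broadcast s).Step F) (Sum.inl s) v) with hT'
  have hTmem : ∀ v, v ∈ T' ↔
      Relation.ReflTransGen ((G.broadcast s).Step F) (Sum.inl s) v := by
    intro v; simp [hT']
  have hTs : Sum.inl s ∈ T' := (hTmem _).2 Relation.ReflTransGen.refl
  have hTt : Sum.inl t ∉ T' := fun hc => hnoaug ((hTmem _).1 hc)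
  have hclosed : ∀ v w, v ∈ T' → (G.broadcast s).Step F v w → w ∈ T' :=
    fun v w hv hs' => (hTmem _).2 (((hTmem _).1 hv).tail hs')
  have hcrossF : ∀ x, (G.broadcast s).tail x ∈ T' → (G.broadcast s).head x ∉ T' → x ∈ F := by
    intro x h1 h2
    by_contra hxF
    exact h2 (hclosed _ _ h1 (Or.inl ⟨x, hxF, rfl, rfl⟩))
  have hrev : (F.filter fun x =>
      (G.broadcast s).head x ∈ T' ∧ (G.broadcast s).tail x ∉ T') = ∅ := by
    rw [Finset.eq_empty_iff_forall_notMem]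
    intro x hx
    rw [Finset.mem_filter] at hx
    exact hx.2.2 (hclosed _ _ hx.2.1 (Or.inr ⟨x, hx.1, rfl, rfl⟩))
  have hcard := (G.broadcast s).cut_card _ _ hst' F m hF T' hTs hTt hrev
  have htout : ∀ x ∈ F, (G.broadcast s).tail x ≠ Sum.inl t :=
    (G.broadcast s).no_edge_out_t _ _ hst' F m hF hFmin
  -- no F-edge leaves the out-copy of t
  have hout_inr_t : ∀ x ∈ F,
      (G.broadcast s).tail x ≠ Sum.inr ⟨t, Ne.symm hst⟩ := by
    intro x hx hc
    have hb := hF (Sum.inr ⟨t, Ne.symm hst⟩)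
    rw [if_neg (by simp), if_neg (by simp)] at hb
    unfold bal at hb
    have hout1 : 1 ≤ (G.broadcast s).outd F (Sum.inr ⟨t, Ne.symm hst⟩) := by
      apply Finset.card_pos.2
      exact ⟨x, Finset.mem_filter.2 ⟨hx, hc⟩⟩
    have hind1 : 1 ≤ (G.broadcast s).ind F (Sum.inr ⟨t, Ne.symm hst⟩) := by omega
    obtain ⟨y, hy⟩ := Finset.card_pos.1 hind1
    rw [Finset.mem_filter] at hy
    rcases y with f | u
    · simp at hy
    · have hu : u = ⟨t, Ne.symm hst⟩ := by simpa using hy.2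
      have := htout (Sum.inr u) hy.1
      rw [hu] at this
      exact this rfl
  have hTinr_t : Sum.inr (⟨t, Ne.symm hst⟩ : {u : V // u ≠ s}) ∉ T' := by
    intro hmem
    rcases Relation.ReflTransGen.cases_tail ((hTmem _).1 hmem) with heq | ⟨c, hrc, hstep⟩
    · simp at heq
    · rcases hstep with ⟨x, hxF, hta, hhe⟩ | ⟨x, hxF, hta, hhe⟩
      · rcases x with f | u
        · simp at hhe
        · have hu : u = ⟨t, Ne.symm hst⟩ := by simpa using hhe
          have hct : c = Sum.inl t := by rw [← hta, hu]; rfl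
          exact hTt (hct ▸ (hTmem _).2 hrc)
      · exact hout_inr_t x hxF hta
  -- vertex cut A
  set assoc : (E ⊕ {u : V // u ≠ s}) → V :=
    Sum.elim (fun e => if G.tail e = s then G.head e else G.tail e) Subtype.val
    with hassoc
  set cross := F.filter (fun x =>
    (G.broadcast s).tail x ∈ T' ∧ (G.broadcast s).head x ∉ T') with hcrossdef
  set A := cross.image assoc with hA
  have hcrossm : cross.card = m := by exact_mod_cast hcard
  have hAcard : A.card ≤ m := hcrossm ▸ Finset.card_image_le
  have hcross_mem : ∀ x, x ∈ cross ↔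
      ((G.broadcast s).tail x ∈ T' ∧ (G.broadcast s).head x ∉ T') := by
    intro x
    rw [hcrossdef, Finset.mem_filter]
    exact ⟨fun h => h.2, fun h => ⟨hcrossF x h.1 h.2, h⟩⟩
  have hsA : s ∉ A := by
    intro hs
    obtain ⟨x, hx, hxa⟩ := Finset.mem_image.1 hs
    rcases x with e | u
    · by_cases h : G.tail e = s
      · have hhead : G.head e = s := by simpa [hassoc, h] using hxa
        have := ((hcross_mem _).1 hx).2
        rw [broadcast_head_inl, hhead] at this
        exact this hTs
      · exact h (by simpa [hassoc, h] using hxa)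
    · exact u.2 (by simpa [hassoc] using hxa)
  have htA : t ∉ A := by
    intro ht
    obtain ⟨x, hx, hxa⟩ := Finset.mem_image.1 ht
    rcases x with e | u
    · by_cases h : G.tail e = s
      · have hhead : G.head e = t := by simpa [hassoc, h] using hxa
        exact hna e ⟨h, hhead⟩
      · have htail : G.tail e = t := by simpa [hassoc, h] using hxa
        have h1 := ((hcross_mem _).1 hx).1
        rw [broadcast_tail_inl, dif_neg h] at h1
        have : (⟨G.tail e, h⟩ : {u : V // u ≠ s}) = ⟨t, Ne.symm hst⟩ :=
          Subtype.ext htail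
        rw [this] at h1
        exact hTinr_t h1
    · have h1 := ((hcross_mem _).1 hx).1
      rw [broadcast_tail_inr] at h1
      have : u.1 = t := by simpa [hassoc] using hxa
      rw [this] at h1
      exact hTt h1
  -- A is a vertex cut
  have hcut : ∀ w : G.Walk s t, ∃ v ∈ w.vertexSet, v ∈ A := by
    intro w
    obtain ⟨e, he, h1, h2⟩ := G.exists_crossing {u : V | Sum.inl u ∈ T'}
      w.edges w.ne w.chain (by rw [w.first]; exact hTs) (by rw [w.last]; exact hTt)
    by_cases hts : G.tail e = s
    · have hmem : Sum.inl e ∈ cross := by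
        rw [hcross_mem]
        constructor
        · rw [broadcast_tail_inl, dif_pos hts]; exact hTs
        · rw [broadcast_head_inl]; exact h2
      exact ⟨G.head e, Or.inr ⟨e, he, rfl⟩,
        Finset.mem_image.2 ⟨Sum.inl e, hmem, by simp [hassoc, hts]⟩⟩
    · have hvert : G.tail e ∈ w.vertexSet := by
        rcases G.tail_mem_internal w.edges w.ne w.chain e he with hcase | ⟨f, hf, hfh⟩
        · rw [w.first] at hcase; exact absurd hcase hts
        · exact Or.inr ⟨f, (List.dropLast_sublist _).subset hf, hfh⟩
      by_cases hrin : Sum.inr ⟨G.tail e, hts⟩ ∈ T'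
      · have hmem : Sum.inl e ∈ cross := by
          rw [hcross_mem]
          constructor
          · rw [broadcast_tail_inl, dif_neg hts]; exact hrin
          · rw [broadcast_head_inl]; exact h2
        exact ⟨G.tail e, hvert,
          Finset.mem_image.2 ⟨Sum.inl e, hmem, by simp [hassoc, hts]⟩⟩
      · have hmem : Sum.inr (⟨G.tail e, hts⟩ : {u : V // u ≠ s}) ∈ cross := by
          rw [hcross_mem]
          constructor
          · rw [broadcast_tail_inr]; exact h1
          · rw [broadcast_head_inr]; exact hrin
        exact ⟨G.tail e, hvert,
          Finset.mem_image.2 ⟨Sum.inr ⟨G.tail e, hts⟩, hmem, by simp [hassoc]⟩⟩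
  -- the edge cut S
  set RA : Finset V := Finset.univ.filter
    (fun v => v = s ∨ ∃ w : G.Walk s v, ∀ x ∈ w.vertexSet, x ∉ A) with hRA
  have hRAmem : ∀ v, v ∈ RA ↔
      (v = s ∨ ∃ w : G.Walk s v, ∀ x ∈ w.vertexSet, x ∉ A) := by
    intro v; simp [hRA]
  set S := RA ∪ A with hS
  have hSs : s ∈ S := Finset.mem_union_left _ ((hRAmem s).2 (Or.inl rfl))
  have hSt : t ∉ S := by
    intro ht
    rcases Finset.mem_union.1 ht with ht | ht
    · rcases (hRAmem t).1 ht with hts | ⟨w, hw⟩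
      · exact hst hts.symm
      · obtain ⟨v, hv1, hv2⟩ := hcut w
        exact hw v hv1 hv2
    · exact htA ht
  have htailA : ∀ v ∈ G.tailSet S, v ∈ A := by
    intro v hv
    obtain ⟨x, hxcut, rfl⟩ := Finset.mem_image.1 hv
    rw [cutE, Finset.mem_filter] at hxcut
    obtain ⟨-, hxS, hxnS⟩ := hxcut
    by_contra hvA
    have hxRA : G.tail x ∈ RA := by
      rcases Finset.mem_union.1 hxS with h | h
      · exact h
      · exact absurd h hvA
    have hheadA : G.head x ∉ A := fun hc => hxnS (Finset.mem_union_right _ hc)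
    apply hxnS
    apply Finset.mem_union_left
    rw [hRAmem]
    right
    rcases (hRAmem _).1 hxRA with hxs | ⟨w, hw⟩
    · refine ⟨⟨[x], by simp, by simpa using hxs, by simp, List.isChain_singleton _⟩, ?_⟩
      rintro y (rfl | ⟨f, hf, hfh⟩)
      · exact hsA
      · simp only [List.mem_singleton] at hf
        subst hf
        exact hfh ▸ hheadA
    · refine ⟨w.snoc_s2 x rfl, ?_⟩
      intro y hy
      rcases w.vertexSet_snoc x rfl hy with hy | hy
      · exact hw y hy
      · simp only [Set.mem_singleton_iff] at hy
        exact hy ▸ hheadA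
  have hstail : s ∉ G.tailSet S := fun hc => hsA (htailA s hc)
  have htScard : (G.tailSet S).card ≤ m :=
    le_trans (Finset.card_le_card htailA) hAcard
  have heasy : ∀ S₀ : Finset V, s ∈ S₀ → t ∉ S₀ → s ∉ G.tailSet S₀ →
      n ≤ (G.tailSet S₀).card :=
    fun S₀ h1 h2 h3 => G.easy_direction s t n hn1 S₀ h1 h2 h3
  refine ⟨n, ⟨hn1, hn2⟩, ⟨S, hSs, hSt, hstail, ?_⟩, heasy⟩
  have := heasy S hSs hSt hstail
  omega
end

section
/- Let G be a finite directed acyclic multigraph with source s such that every vertex v ≠ s has diversity d(v) ≥ d. Then for every vertex t ≠ s (including vertices adjacent to s), the maximum number of pairwise internally-disjoint directed paths from s to t (where paths consisting of a single edge from s to t are counted, and parallel s→t edges count as distinct internally-disjoint paths) is at least d. -/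
namespace Multigraph

variable {V E : Type}

section Stmt4Aux

variable {G : Multigraph V E} {s t : V}

/-- single-edge walk -/
def singleWalk (G : Multigraph V E) (e : E) {s t : V} (h1 : G.tail e = s)
    (h2 : G.head e = t) : G.Walk s t :=
  ⟨[e], by simp, by simpa, by simpa, List.isChain_singleton e⟩

@[simp] lemma singleWalk_edges (e : E) (h1 : G.tail e = s) (h2 : G.head e = t) :
    (G.singleWalk e h1 h2).edges = [e] := rfl

@[simp] lemma singleWalk_internals (e : E) (h1 : G.tail e = s) (h2 : G.head e = t) :
    (G.singleWalk e h1 h2).internals = ∅ := by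
  simp [Walk.internals, singleWalk]

@[simp] lemma singleWalk_edgeSet (e : E) (h1 : G.tail e = s) (h2 : G.head e = t) :
    (G.singleWalk e h1 h2).edgeSet = {e} := by
  simp [Walk.edgeSet, singleWalk]

/-- append two walks -/
def Walk.append {a b c : V} (w1 : G.Walk a b) (w2 : G.Walk b c) : G.Walk a c where
  edges := w1.edges ++ w2.edges
  ne := by simp [w1.ne]
  first := by
    rw [List.head_append_of_ne_nil w1.ne]  -- guess name
    exact w1.first
  last := by
    rw [List.getLast_append_of_ne_nil _ w2.ne]  -- guess
    exact w2.last
  chain := by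
    apply List.IsChain.append w1.chain w2.chain
    intro x hx y hy
    rw [List.getLast?_eq_getLast w1.ne] at hx
    rw [List.head?_eq_head w2.ne] at hy
    cases hx; cases hy
    rw [w1.last, w2.first]


@[simp] lemma append_edges {a b c : V} (w1 : G.Walk a b) (w2 : G.Walk b c) :
    (w1.append w2).edges = w1.edges ++ w2.edges := rfl

/-- reflexive-transitive reachability -/
def Reach (G : Multigraph V E) (u v : V) : Prop := u = v ∨ Nonempty (G.Walk u v)

lemma reach_refl (G : Multigraph V E) (v : V) : G.Reach v v := Or.inl rfl

lemma reach_trans {u v w : V} (h1 : G.Reach u v) (h2 : G.Reach v w) : G.Reach u w := by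
  rcases h1 with rfl | h1
  · exact h2
  rcases h2 with rfl | h2
  · exact Or.inr h1
  · exact Or.inr ⟨h1.some.append h2.some⟩

lemma not_reach_both (hacyc : G.Acyclic) {u v : V} (h1 : G.Reach u v)
    (h2 : G.Reach v u) (hne : u ≠ v) : False := by
  rcases h1 with rfl | h1
  · exact hne rfl
  rcases h2 with rfl | h2
  · exact hne rfl
  · exact (hacyc u).false (h1.some.append h2.some)

/-- suffix reachability: the head of any edge of a walk reaches the end. -/
lemma reach_head_of_mem (w : G.Walk s t) {e : E} (he : e ∈ w.edges) :
    G.Reach (G.head e) t := by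
  obtain ⟨l1, l2, hl⟩ := List.append_of_mem he
  cases l2 with
  | nil =>
    left
    have hsome : w.edges.getLast? = some e := by rw [hl]; simp
    rw [List.getLast?_eq_getLast w.ne] at hsome
    rw [← w.last, Option.some_inj.1 hsome]
  | cons f l2' =>
    right
    have hchain : (e :: f :: l2').Chain' fun e f => G.head e = G.tail f := by
      have := w.chain
      rw [hl] at this
      exact this.suffix ⟨l1, rfl⟩
    refine ⟨⟨f :: l2', by simp, ?_, ?_, hchain.tail⟩⟩
    · simp only [List.head_cons]
      exact (List.isChain_cons_cons.1 hchain).1.symm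
    · have hsome : w.edges.getLast? = some ((f :: l2').getLast (by simp)) := by
        rw [hl, show l1 ++ e :: f :: l2' = (l1 ++ [e]) ++ (f :: l2') by simp,
          List.getLast?_append_of_ne_nil _ (by simp), List.getLast?_eq_getLast (by simp)]
      rw [List.getLast?_eq_getLast w.ne] at hsome
      rw [← w.last, Option.some_inj.1 hsome]

lemma reach_of_internal (w : G.Walk s t) {x : V} (hx : x ∈ w.internals) :
    G.Reach x t := by
  obtain ⟨e, he, rfl⟩ := hx
  exact reach_head_of_mem w (w.edges.dropLast_sublist.subset he)

section Ord
variable [Fintype V]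

/-- topological rank -/
noncomputable def ordv (G : Multigraph V E) (v : V) : ℕ := {u | G.Reach u v}.ncard

lemma ordv_pos (G : Multigraph V E) (v : V) : 1 ≤ G.ordv v :=
  (Set.ncard_pos (Set.toFinite _)).2 ⟨v, reach_refl G v⟩

lemma ordv_le {u v : V} (h : G.Reach u v) : G.ordv u ≤ G.ordv v :=
  Set.ncard_le_ncard (fun x hx => reach_trans hx h) (Set.toFinite _)

lemma ordv_lt (hacyc : G.Acyclic) {u v : V} (h : G.Reach u v) (hne : u ≠ v) :
    G.ordv u < G.ordv v := by
  apply Set.ncard_lt_ncard _ (Set.toFinite _)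
  constructor
  · exact fun x hx => reach_trans hx h
  · intro hsub
    exact not_reach_both hacyc h (hsub (reach_refl G v)) hne

end Ord

/-- cast a walk along an equality of endpoints -/
def Walk.castW {a b : V} (h : a = b) (w : G.Walk s a) : G.Walk s b := h ▸ w

@[simp] lemma castW_edges {a b : V} (h : a = b) (w : G.Walk s a) :
    (w.castW h).edges = w.edges := by subst h; rfl

@[simp] lemma castW_internals {a b : V} (h : a = b) (w : G.Walk s a) :
    (w.castW h).internals = w.internals := by subst h; rfl

@[simp] lemma castW_edgeSet {a b : V} (h : a = b) (w : G.Walk s a) :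
    (w.castW h).edgeSet = w.edgeSet := by subst h; rfl

/-- internals of a walk extended by one edge -/
lemma internals_append_single {p : V} (w : G.Walk s p) (e : E)
    (h1 : G.tail e = p) (h2 : G.head e = t) :
    (w.append (G.singleWalk e h1 h2)).internals = w.internals ∪ {p} := by
  ext x
  simp only [Walk.internals, append_edges, singleWalk_edges, Set.mem_setOf_eq,
    Set.mem_union, Set.mem_singleton_iff]
  rw [List.dropLast_concat]
  have hsplit : ∀ f, f ∈ w.edges ↔ f ∈ w.edges.dropLast ∨ f = w.edges.getLast w.ne := by
    intro f
    conv_lhs => rw [← List.dropLast_append_getLast w.ne]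
    simp
  constructor
  · rintro ⟨f, hf, rfl⟩
    rcases (hsplit f).1 hf with hf' | rfl
    · exact Or.inl ⟨f, hf', rfl⟩
    · exact Or.inr w.last
  · rintro (⟨f, hf, rfl⟩ | rfl)
    · exact ⟨f, (hsplit f).2 (Or.inl hf), rfl⟩
    · exact ⟨w.edges.getLast w.ne, (hsplit _).2 (Or.inr rfl), w.last⟩


@[simp] lemma edgeSet_append_single {p : V} (w : G.Walk s p) (e : E)
    (h1 : G.tail e = p) (h2 : G.head e = t) {f : E} :
    f ∈ (w.append (G.singleWalk e h1 h2)).edgeSet ↔ f ∈ w.edgeSet ∨ f = e := by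
  simp [Walk.edgeSet, Walk.append, singleWalk]

lemma reach_of_mem_edgeSet (w : G.Walk s t) {e : E} (he : e ∈ w.edgeSet) :
    G.Reach (G.head e) t := reach_head_of_mem w he

lemma fanLemma [Fintype V] [Fintype E] [DecidableEq V]
    (G : Multigraph V E) (s : V) (hacyc : G.Acyclic) (d : ℕ)
    (hdiv : ∀ v : V, v ≠ s → d ≤ G.diversity s v) :
    ∀ (n : ℕ) (T : Finset V), T.sum G.ordv ≤ n → s ∉ T → T.card ≤ d →
      ∃ P : ∀ t ∈ T, G.Walk s t,
        (∀ t (ht : t ∈ T), ∀ x ∈ (P t ht).internals, x ∉ T) ∧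
        (∀ t (ht : t ∈ T) t' (ht' : t' ∈ T), t ≠ t' →
          (∀ x ∈ (P t ht).internals, x ∉ (P t' ht').internals) ∧
          (∀ e ∈ (P t ht).edgeSet, e ∉ (P t' ht').edgeSet)) := by
  intro n
  induction n with
  | zero =>
    intro T hsum _ _
    have hT : T = ∅ := by
      by_contra h
      obtain ⟨t, ht⟩ := Finset.nonempty_iff_ne_empty.2 h
      have h1 := G.ordv_pos t
      have h2 : G.ordv t ≤ T.sum G.ordv := Finset.single_le_sum (fun _ _ => Nat.zero_le _) ht
      omega
    subst hT
    exact ⟨fun t ht => absurd ht (by simp), fun t ht => absurd ht (by simp),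
      fun t ht => absurd ht (by simp)⟩
  | succ n IH =>
    intro T hsum hsT hcard
    rcases T.eq_empty_or_nonempty with rfl | hne
    · exact ⟨fun t ht => absurd ht (by simp), fun t ht => absurd ht (by simp),
        fun t ht => absurd ht (by simp)⟩
    obtain ⟨tm, htm, hmax⟩ := T.exists_max_image G.ordv hne
    have htms : tm ≠ s := fun h => hsT (h ▸ htm)
    have hdivt := hdiv tm htms
    set K : Finset V :=
      Finset.univ.filter (fun u => u ≠ s ∧ ∃ e : E, G.tail e = u ∧ G.head e = tm) with hK
    set D : Finset E :=
      Finset.univ.filter (fun e : E => G.tail e = s ∧ G.head e = tm) with hD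
    have hsum' : (T.erase tm).sum G.ordv + G.ordv tm = T.sum G.ordv :=
      Finset.sum_erase_add T _ htm
    have hposm := G.ordv_pos tm
    -- fact: for t' in T.erase tm, walks ending at t' don't touch tm
    rcases D.eq_empty_or_nonempty with hDe | ⟨e, heD⟩
    · -- no direct edge s → tm : use a parent p ∉ T.erase tm
      have hKd : d ≤ K.card := by
        have hdd : d ≤ K.card + D.card := hdivt
        have : D.card = 0 := by rw [hDe]; simp
        omega
      have hcard' : (T.erase tm).card < K.card := by
        have := Finset.card_erase_of_mem htm
        have := Finset.card_pos.2 hne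
        omega
      have : ¬ K ⊆ T.erase tm := fun h => absurd (Finset.card_le_card h) (by omega)
      obtain ⟨p, hpK, hpe⟩ := Finset.not_subset.1 this
      rw [hK, Finset.mem_filter] at hpK
      obtain ⟨-, hps, e, he1, he2⟩ := hpK
      have hreach_ptm : G.Reach p tm := Or.inr ⟨G.singleWalk e he1 he2⟩
      have hptm : p ≠ tm := by
        rintro rfl
        exact (hacyc p).false (G.singleWalk e he1 he2)
      have hordp : G.ordv p < G.ordv tm := G.ordv_lt hacyc hreach_ptm hptm
      set T'' : Finset V := insert p (T.erase tm) with hT''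
      have hpnotin : p ∉ T.erase tm := hpe
      have hsT'' : s ∉ T'' := by
        simp only [hT'', Finset.mem_insert, Finset.mem_erase]
        rintro (rfl | ⟨-, h⟩)
        · exact hps rfl
        · exact hsT h
      have hcard'' : T''.card ≤ d := by
        rw [hT'', Finset.card_insert_of_notMem hpnotin, Finset.card_erase_of_mem htm]
        have := Finset.card_pos.2 hne
        omega
      have hsum'' : T''.sum G.ordv ≤ n := by
        rw [hT'', Finset.sum_insert hpnotin]
        have hre : ∑ x ∈ T.erase tm, G.ordv x = (T.erase tm).sum G.ordv := rfl
        omega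
      obtain ⟨P'', havoid'', hdisj''⟩ := IH T'' hsum'' hsT'' hcard''
      have hpT'' : p ∈ T'' := Finset.mem_insert_self _ _
      have hmemT'' : ∀ t', t' ∈ T.erase tm → t' ∈ T'' :=
        fun t' h => Finset.mem_insert_of_mem h
      -- walks of P'' never touch tm (internally or via edges with head tm)
      have hno_tm_int : ∀ u (hu : u ∈ T''), tm ∉ (P'' u hu).internals := by
        intro u hu hmem
        have hru : G.Reach tm u := reach_of_internal _ hmem
        have hutm : u ≠ tm := by
          rintro rfl
          rcases Finset.mem_insert.1 hu with rfl | h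
          · exact hptm rfl
          · exact (Finset.mem_erase.1 h).1 rfl
        have hle : G.ordv u ≤ G.ordv tm := by
          rcases Finset.mem_insert.1 hu with rfl | h
          · exact le_of_lt hordp
          · exact hmax u (Finset.mem_of_mem_erase h)
        exact absurd (G.ordv_lt hacyc hru (Ne.symm hutm)) (by omega)
      have hno_tm_edge : ∀ u (hu : u ∈ T'') f, G.head f = tm → f ∉ (P'' u hu).edgeSet := by
        intro u hu f hf hmem
        have hru : G.Reach tm u := hf ▸ reach_of_mem_edgeSet _ hmem
        have hutm : u ≠ tm := by
          rintro rfl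
          rcases Finset.mem_insert.1 hu with rfl | h
          · exact hptm rfl
          · exact (Finset.mem_erase.1 h).1 rfl
        have hle : G.ordv u ≤ G.ordv tm := by
          rcases Finset.mem_insert.1 hu with rfl | h
          · exact le_of_lt hordp
          · exact hmax u (Finset.mem_of_mem_erase h)
        exact absurd (G.ordv_lt hacyc hru (Ne.symm hutm)) (by omega)
      -- the new walk to tm
      set Wtm : G.Walk s tm := (P'' p hpT'').append (G.singleWalk e he1 he2) with hWtm
      have hWtm_int : Wtm.internals = (P'' p hpT'').internals ∪ {p} :=
        internals_append_single _ e he1 he2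
      refine ⟨fun u hu => if h : u = tm then (Wtm.castW h.symm) else
        P'' u (hmemT'' u (Finset.mem_erase.2 ⟨h, hu⟩)), ?_, ?_⟩
      · -- internals avoid T
        intro u hu x hx hxT
        by_cases h : u = tm
        · dsimp only at hx
          rw [dif_pos h, castW_internals, hWtm_int] at hx
          rcases hx with hx | rfl
          · -- x internal of P'' p : avoids T''
            rcases eq_or_ne x tm with rfl | hxtm
            · exact hno_tm_int p hpT'' hx
            · exact havoid'' p hpT'' x hx (hmemT'' x (Finset.mem_erase.2 ⟨hxtm, hxT⟩))
          · -- x = p ∈ T : but p ∉ T.erase tm and p ≠ tm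
            exact hpnotin (Finset.mem_erase.2 ⟨hptm, hxT⟩)
        · dsimp only at hx
          rw [dif_neg h] at hx
          rcases eq_or_ne x tm with rfl | hxtm
          · exact hno_tm_int _ _ hx
          · exact havoid'' u _ x hx (hmemT'' x (Finset.mem_erase.2 ⟨hxtm, hxT⟩))
      · -- pairwise disjointness
        intro u hu u' hu' huu'
        by_cases h : u = tm <;> by_cases h' : u' = tm
        · exact absurd (h.trans h'.symm) huu'
        · dsimp only
          rw [dif_pos h, dif_neg h']
          have hu'T'' := hmemT'' u' (Finset.mem_erase.2 ⟨h', hu'⟩)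
          constructor
          · intro x hx hx'
            rw [castW_internals, hWtm_int] at hx
            rcases hx with hx | rfl
            · exact (hdisj'' p hpT'' u' hu'T'' (by
                rintro rfl; exact hpe (Finset.mem_erase.2 ⟨h', hu'⟩))).1 x hx hx'
            · exact havoid'' u' hu'T'' _ hx' hpT''
          · intro f hf hf'
            rw [castW_edgeSet] at hf
            rcases (edgeSet_append_single _ e he1 he2).1 hf with hf | rfl
            · exact (hdisj'' p hpT'' u' hu'T'' (by
                rintro rfl; exact hpe (Finset.mem_erase.2 ⟨h', hu'⟩))).2 f hf hf'
            · exact hno_tm_edge u' hu'T'' f he2 hf'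
        · dsimp only
          rw [dif_pos h', dif_neg h]
          have huT'' := hmemT'' u (Finset.mem_erase.2 ⟨h, hu⟩)
          constructor
          · intro x hx hx'
            rw [castW_internals, hWtm_int] at hx'
            rcases hx' with hx' | rfl
            · exact (hdisj'' u huT'' p hpT'' (by
                rintro rfl; exact hpe (Finset.mem_erase.2 ⟨h, hu⟩))).1 x hx hx'
            · exact havoid'' u huT'' _ hx hpT''
          · intro f hf hf'
            rw [castW_edgeSet] at hf'
            rcases (edgeSet_append_single _ e he1 he2).1 hf' with hf' | rfl
            · exact (hdisj'' u huT'' p hpT'' (by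
                rintro rfl; exact hpe (Finset.mem_erase.2 ⟨h, hu⟩))).2 f hf hf'
            · exact hno_tm_edge u huT'' f he2 hf
        · dsimp only
          rw [dif_neg h, dif_neg h']
          exact hdisj'' u _ u' _ huu'
    · -- direct edge e : s → tm exists
      rw [hD, Finset.mem_filter] at heD
      obtain ⟨-, he1, he2⟩ := heD
      have hsumT' : (T.erase tm).sum G.ordv ≤ n := by omega
      have hsT' : s ∉ T.erase tm := fun h => hsT (Finset.mem_of_mem_erase h)
      have hcardT' : (T.erase tm).card ≤ d := by
        rw [Finset.card_erase_of_mem htm]; omega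
      obtain ⟨P', havoid', hdisj'⟩ := IH (T.erase tm) hsumT' hsT' hcardT'
      have hno_tm_int : ∀ u (hu : u ∈ T.erase tm), tm ∉ (P' u hu).internals := by
        intro u hu hmem
        have hru : G.Reach tm u := reach_of_internal _ hmem
        have hutm : u ≠ tm := (Finset.mem_erase.1 hu).1
        have hle : G.ordv u ≤ G.ordv tm := hmax u (Finset.mem_of_mem_erase hu)
        exact absurd (G.ordv_lt hacyc hru (Ne.symm hutm)) (by omega)
      have hno_tm_edge : ∀ u (hu : u ∈ T.erase tm) f, G.head f = tm →
          f ∉ (P' u hu).edgeSet := by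
        intro u hu f hf hmem
        have hru : G.Reach tm u := hf ▸ reach_of_mem_edgeSet _ hmem
        have hutm : u ≠ tm := (Finset.mem_erase.1 hu).1
        have hle : G.ordv u ≤ G.ordv tm := hmax u (Finset.mem_of_mem_erase hu)
        exact absurd (G.ordv_lt hacyc hru (Ne.symm hutm)) (by omega)
      set Wtm : G.Walk s tm := G.singleWalk e he1 he2 with hWtm
      refine ⟨fun u hu => if h : u = tm then (Wtm.castW h.symm) else
        P' u (Finset.mem_erase.2 ⟨h, hu⟩), ?_, ?_⟩
      · intro u hu x hx hxT
        by_cases h : u = tm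
        · dsimp only at hx
          rw [dif_pos h, castW_internals, hWtm] at hx
          simp at hx
        · dsimp only at hx
          rw [dif_neg h] at hx
          rcases eq_or_ne x tm with rfl | hxtm
          · exact hno_tm_int _ _ hx
          · exact havoid' u _ x hx (Finset.mem_erase.2 ⟨hxtm, hxT⟩)
      · intro u hu u' hu' huu'
        by_cases h : u = tm <;> by_cases h' : u' = tm
        · exact absurd (h.trans h'.symm) huu'
        · dsimp only
          rw [dif_pos h, dif_neg h']
          constructor
          · intro x hx
            rw [castW_internals, hWtm] at hx
            simp at hx
          · intro f hf hf'
            rw [castW_edgeSet, hWtm, singleWalk_edgeSet, Set.mem_singleton_iff] at hf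
            subst hf
            exact hno_tm_edge u' _ f he2 hf'
        · dsimp only
          rw [dif_pos h', dif_neg h]
          constructor
          · intro x hx hx'
            rw [castW_internals, hWtm] at hx'
            simp at hx'
          · intro f hf hf'
            rw [castW_edgeSet, hWtm, singleWalk_edgeSet, Set.mem_singleton_iff] at hf'
            subst hf'
            exact hno_tm_edge u _ f he2 hf
        · dsimp only
          rw [dif_neg h, dif_neg h']
          exact hdisj' u _ u' _ huu'


theorem stmt4x {V E : Type} [Fintype V] [Fintype E] [DecidableEq V]
    (G : Multigraph V E) (s : V) (hacyc : G.Acyclic) (d : ℕ)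
    (hdiv : ∀ v : V, v ≠ s → d ≤ G.diversity s v)
    (t : V) (hts : t ≠ s) :
    G.HasIntDisjoint s t d := by
  classical
  set D : Finset E := Finset.univ.filter (fun e : E => G.tail e = s ∧ G.head e = t) with hD
  set K : Finset V :=
    Finset.univ.filter (fun u => u ≠ s ∧ ∃ e : E, G.tail e = u ∧ G.head e = t) with hK
  have hdd : d ≤ K.card + D.card := hdiv t hts
  set a := min d D.card with ha
  set r := d - a with hr
  have har : a + r = d := by omega
  have hrK : r ≤ K.card := by omega
  obtain ⟨D', hD'sub, hD'card⟩ := Finset.exists_subset_card_eq (s := D) (n := a) (min_le_right _ _)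
  obtain ⟨T, hTsub, hTcard⟩ := Finset.exists_subset_card_eq (s := K) (n := r) hrK
  have hTK : ∀ p ∈ T, p ≠ s ∧ ∃ e : E, G.tail e = p ∧ G.head e = t := by
    intro p hp
    have := hTsub hp
    rw [hK, Finset.mem_filter] at this
    exact this.2
  have hsT : s ∉ T := fun h => (hTK s h).1 rfl
  obtain ⟨P, havoid, hdisj⟩ := fanLemma G s hacyc d hdiv (T.sum G.ordv) T le_rfl hsT
    (by omega)
  have hch : ∀ p, p ∈ T → ∃ ep : E, G.tail ep = p ∧ G.head ep = t :=
    fun p hp => (hTK p hp).2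
  choose ep hep1 hep2 using hch
  -- every p ∈ T reaches t, hence walks of P avoid t and head-t edges
  have hreach_pt : ∀ p (hp : p ∈ T), G.Reach p t :=
    fun p hp => Or.inr ⟨G.singleWalk (ep p hp) (hep1 p hp) (hep2 p hp)⟩
  have hpt : ∀ p (hp : p ∈ T), p ≠ t := by
    rintro p hp rfl
    exact (hacyc p).false (G.singleWalk (ep p hp) (hep1 p hp) (hep2 p hp))
  have hnot_t_int : ∀ p (hp : p ∈ T), t ∉ (P p hp).internals := by
    intro p hp hmem
    exact not_reach_both hacyc (reach_of_internal _ hmem) (hreach_pt p hp)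
      (Ne.symm (hpt p hp))
  have hnot_t_edge : ∀ p (hp : p ∈ T) f, G.head f = t → f ∉ (P p hp).edgeSet := by
    intro p hp f hf hmem
    exact not_reach_both hacyc (hf ▸ reach_of_mem_edgeSet _ hmem) (hreach_pt p hp)
      (Ne.symm (hpt p hp))
  -- index equivalences
  set eD := (Finset.equivFinOfCardEq hD'card).symm with heD
  set eT := (Finset.equivFinOfCardEq hTcard).symm with heT
  have hDmem : ∀ i : Fin a, G.tail ((eD i : {x // x ∈ D'}) : E) = s ∧
      G.head ((eD i : {x // x ∈ D'}) : E) = t := by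
    intro i
    have := hD'sub (eD i).2
    rw [hD, Finset.mem_filter] at this
    exact this.2
  set Wfun : Fin a ⊕ Fin r → G.Walk s t := fun x =>
    match x with
    | Sum.inl i => G.singleWalk ((eD i : {x // x ∈ D'}) : E) (hDmem i).1 (hDmem i).2
    | Sum.inr j => (P ((eT j : {x // x ∈ T}) : V) (eT j).2).append
        (G.singleWalk (ep _ (eT j).2) (hep1 _ (eT j).2) (hep2 _ (eT j).2)) with hWfun
  have key : ∀ x y : Fin a ⊕ Fin r, x ≠ y →
      (Wfun x).internals ∩ (Wfun y).internals = ∅ ∧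
      (Wfun x).edgeSet ∩ (Wfun y).edgeSet = ∅ := by
    have hint : ∀ j : Fin r, (Wfun (Sum.inr j)).internals
        = (P ((eT j : {x // x ∈ T}) : V) (eT j).2).internals ∪ {((eT j : {x // x ∈ T}) : V)} :=
      fun j => internals_append_single _ _ _ _
    have hedge : ∀ (j : Fin r) f, f ∈ (Wfun (Sum.inr j)).edgeSet ↔
        f ∈ (P ((eT j : {x // x ∈ T}) : V) (eT j).2).edgeSet ∨ f = ep _ (eT j).2 :=
      fun j f => edgeSet_append_single _ _ _ _
    have hTne : ∀ j j' : Fin r, j ≠ j' →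
        ((eT j : {x // x ∈ T}) : V) ≠ ((eT j' : {x // x ∈ T}) : V) := by
      intro j j' hjj' hc
      exact hjj' (eT.injective (Subtype.ext hc))
    rintro (i | j) (i' | j') hxy
    · -- inl inl
      refine ⟨by simp [hWfun], ?_⟩
      have hii : i ≠ i' := fun h => hxy (h ▸ rfl)
      rw [Set.eq_empty_iff_forall_notMem]
      rintro f ⟨hf1, hf2⟩
      simp only [hWfun, singleWalk_edgeSet, Set.mem_singleton_iff] at hf1 hf2
      subst hf1
      exact hii (eD.injective (Subtype.ext hf2))
    · -- inl inr
      refine ⟨by simp [hWfun], ?_⟩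
      rw [Set.eq_empty_iff_forall_notMem]
      rintro f ⟨hf1, hf2⟩
      simp only [hWfun, singleWalk_edgeSet, Set.mem_singleton_iff] at hf1
      subst hf1
      rcases (hedge j' _).1 hf2 with hf | hf
      · exact hnot_t_edge _ _ _ (hDmem i).2 hf
      · have h1 : G.tail ((eD i : {x // x ∈ D'}) : E) = s := (hDmem i).1
        rw [hf, hep1] at h1
        exact (hTK _ (eT j').2).1 h1
    · -- inr inl
      refine ⟨by simp [hWfun], ?_⟩
      rw [Set.eq_empty_iff_forall_notMem]
      rintro f ⟨hf2, hf1⟩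
      simp only [hWfun, singleWalk_edgeSet, Set.mem_singleton_iff] at hf1
      subst hf1
      rcases (hedge j _).1 hf2 with hf | hf
      · exact hnot_t_edge _ _ _ (hDmem i').2 hf
      · have h1 : G.tail ((eD i' : {x // x ∈ D'}) : E) = s := (hDmem i').1
        rw [hf, hep1] at h1
        exact (hTK _ (eT j).2).1 h1
    · -- inr inr
      have hjj : j ≠ j' := fun h => hxy (h ▸ rfl)
      have hpp := hTne j j' hjj
      constructor
      · rw [Set.eq_empty_iff_forall_notMem]
        rintro x ⟨hx1, hx2⟩
        rw [hint j] at hx1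
        rw [hint j'] at hx2
        rcases hx1 with hx1 | rfl
        · rcases hx2 with hx2 | rfl
          · exact (hdisj _ (eT j).2 _ (eT j').2 hpp).1 x hx1 hx2
          · exact havoid _ (eT j).2 _ hx1 (eT j').2
        · rcases hx2 with hx2 | hx2
          · exact havoid _ (eT j').2 _ hx2 (eT j).2
          · exact hpp (hx2 : _ = _)
      · rw [Set.eq_empty_iff_forall_notMem]
        rintro f ⟨hf1, hf2⟩
        rcases (hedge j _).1 hf1 with hf1 | rfl
        · rcases (hedge j' _).1 hf2 with hf2 | rfl
          · exact (hdisj _ (eT j).2 _ (eT j').2 hpp).2 f hf1 hf2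
          · exact hnot_t_edge _ (eT j).2 _ (hep2 _ (eT j').2) hf1
        · rcases (hedge j' _).1 hf2 with hf2 | hf2
          · exact hnot_t_edge _ (eT j').2 _ (hep2 _ (eT j).2) hf2
          · apply hpp
            rw [← hep1 _ (eT j).2, ← hep1 _ (eT j').2, hf2]
  set q : Fin d ≃ (Fin a ⊕ Fin r) := (finCongr har.symm).trans finSumFinEquiv.symm with hq
  exact ⟨fun i => Wfun (q i), fun i j hij => key (q i) (q j) (q.injective.ne hij)⟩


end Stmt4Aux

end Multigraph

/-- In an acyclic multigraph in which every non-source vertex has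
diversity at least `d`, every vertex `t ≠ s` (adjacent to `s` or not) admits
at least `d` pairwise internally-disjoint paths from `s` (parallel direct
edges counting as distinct internally-disjoint paths). -/
theorem stmt4 {V E : Type} [Fintype V] [Fintype E] [DecidableEq V]
    (G : Multigraph V E) (s : V) (hacyc : G.Acyclic) (d : ℕ)
    (hdiv : ∀ v : V, v ≠ s → d ≤ G.diversity s v)
    (t : V) (hts : t ≠ s) :
    G.HasIntDisjoint s t d :=
  Multigraph.stmt4x G s hacyc d hdiv t hts
end
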